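/- arXiv:2310.20181 — 9 statements merged into one kernel-verified Lean document; each statement's English description precedes it below -/
import Mathlib

section
/- Let (α, μ) be a measure space, let V : α → ℝ be measurable with essential supremum ‖V‖_∞ < ∞, let β ∈ ℝ and σ > 0, and define B(v)(x) = V(x) v(x) + β |v(x)|^(2σ) v(x). Then for all measurable v, w : α → ℂ with |v(x)| ≤ M and |w(x)| ≤ M almost everywhere, one has ‖B(v) − B(w)‖_{L²} ≤ (‖V‖_∞ + (2σ+1) |β| M^(2σ)) ‖v − w‖_{L²}. -/
open MeasureTheory ENNReal NNReal

/-- Key real inequality: for `0 < p` and `0 ≤ b ≤ a`,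
`(a ^ p - b ^ p) * b ≤ p * a ^ p * (a - b)`. -/
lemma key_rpow {p a b : ℝ} (hp : 0 < p) (hb : 0 ≤ b) (hba : b ≤ a) :
    (a ^ p - b ^ p) * b ≤ p * a ^ p * (a - b) := by
  rcases hb.eq_or_lt with rfl | hb'
  · simp only [mul_zero, sub_zero]
    positivity
  have ha : 0 < a := lt_of_lt_of_le hb' hba
  have hap : 0 < a ^ p := Real.rpow_pos_of_pos ha p
  have hbp : 0 < b ^ p := Real.rpow_pos_of_pos hb' p
  have hab0 : 0 ≤ a - b := by linarith
  rcases le_total 1 p with hp1 | hp1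
  · -- Bernoulli lower bound
    have hs : -1 ≤ b / a - 1 := by
      have : 0 ≤ b / a := div_nonneg hb ha.le
      linarith
    have h := one_add_mul_self_le_rpow_one_add hs hp1
    have he : 1 + (b / a - 1) = b / a := by ring
    rw [he, Real.div_rpow hb ha.le] at h
    -- h : 1 + p * (b/a - 1) ≤ b^p / a^p
    have h2 : a ^ p * (1 + p * (b / a - 1)) ≤ b ^ p := by
      rw [mul_comm]
      exact (le_div_iff₀ hap).mp h
    have h2' : a ^ p * (1 + p * (b / a - 1)) * b ≤ b ^ p * b :=
      mul_le_mul_of_nonneg_right h2 hb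
    have h4 : a ^ p * (1 + p * (b / a - 1)) * b
        = a ^ p * b + p * a ^ p * (b / a) * b - p * a ^ p * b := by ring
    have h5 : p * a ^ p * (b / a) * b = p * a ^ p * b * (b / a) := by ring
    have hba1 : b / a ≤ 1 := (div_le_one ha).2 hba
    -- so (a^p - b^p) * b ≤ p * a^p * b - p * a^p * (b/a) * b
    have h6 : (a ^ p - b ^ p) * b ≤ p * a ^ p * b - p * a ^ p * (b / a) * b := by
      nlinarith [h2']
    have h7 : p * a ^ p * (b / a) * b = p * a ^ p * (b * b / a) := by ring
    -- need: p*a^p*b - p*a^p*(b*b/a) ≤ p*a^p*(a-b), i.e. b - b²/a ≤ a - b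
    have h8 : b - b * b / a ≤ a - b := by
      rw [sub_le_sub_iff, ← sub_nonneg]
      have heq : a + b * b / a - (b + b) = (a * a + b * b - (b + b) * a) / a := by
        field_simp
      rw [heq]
      exact div_nonneg (by nlinarith [sq_nonneg (a - b)]) ha.le
    calc (a ^ p - b ^ p) * b ≤ p * a ^ p * b - p * a ^ p * (b * b / a) := by
          rw [← h7]; exact h6
      _ = p * a ^ p * (b - b * b / a) := by ring
      _ ≤ p * a ^ p * (a - b) := by
          apply mul_le_mul_of_nonneg_left h8
          positivity
  · -- Bernoulli upper bound
    have hs : -1 ≤ a / b - 1 := by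
      have : 0 ≤ a / b := div_nonneg ha.le hb
      linarith
    have h := rpow_one_add_le_one_add_mul_self hs hp.le hp1
    have he : 1 + (a / b - 1) = a / b := by ring
    rw [he, Real.div_rpow ha.le hb'.le] at h
    have h2 : a ^ p ≤ b ^ p * (1 + p * (a / b - 1)) := by
      rw [mul_comm]
      exact (div_le_iff₀ hbp).mp h
    have h2' : a ^ p * b ≤ b ^ p * (1 + p * (a / b - 1)) * b :=
      mul_le_mul_of_nonneg_right h2 hb
    have hd : b * (a / b - 1) = a - b := by field_simp
    have h4 : b ^ p * (1 + p * (a / b - 1)) * b = b ^ p * b + p * b ^ p * (a - b) := by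
      rw [show b ^ p * (1 + p * (a / b - 1)) * b
          = b ^ p * b + p * b ^ p * (b * (a / b - 1)) by ring, hd]
    have h3 : (a ^ p - b ^ p) * b ≤ p * b ^ p * (a - b) := by nlinarith [h2', h4]
    refine h3.trans ?_
    have hab : b ^ p ≤ a ^ p := Real.rpow_le_rpow hb hba hp.le
    have := mul_le_mul_of_nonneg_right (mul_le_mul_of_nonneg_left hab hp.le) hab0
    linarith

/-- Lipschitz estimate for `z ↦ |z|^p z` on a ball of radius `M`. -/
lemma nonlin_lip {p M : ℝ} (hp : 0 < p) (z₁ z₂ : ℂ)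
    (h1 : ‖z₁‖ ≤ M) (h2 : ‖z₂‖ ≤ M) :
    ‖((‖z₁‖ ^ p : ℝ) : ℂ) * z₁ - ((‖z₂‖ ^ p : ℝ) : ℂ) * z₂‖
      ≤ (p + 1) * M ^ p * ‖z₁ - z₂‖ := by
  wlog hle : ‖z₂‖ ≤ ‖z₁‖ generalizing z₁ z₂
  · have := this z₂ z₁ h2 h1 (le_of_not_ge hle)
    rw [← norm_neg] at this
    rw [← norm_neg (z₁ - z₂)]
    simpa [neg_sub] using this
  set a := ‖z₁‖ with ha
  set b := ‖z₂‖ with hb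
  have ha0 : 0 ≤ a := norm_nonneg _
  have hb0 : 0 ≤ b := norm_nonneg _
  have hM : 0 ≤ M := ha0.trans h1
  have hpow : b ^ p ≤ a ^ p := Real.rpow_le_rpow hb0 hle hp.le
  have hsplit : ((a ^ p : ℝ) : ℂ) * z₁ - ((b ^ p : ℝ) : ℂ) * z₂
      = ((a ^ p : ℝ) : ℂ) * (z₁ - z₂) + (((a ^ p - b ^ p : ℝ)) : ℂ) * z₂ := by
    push_cast
    ring
  rw [hsplit]
  have habd : a - b ≤ ‖z₁ - z₂‖ := by
    have := norm_sub_norm_le z₁ z₂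
    linarith [this]
  have hpanonneg : (0:ℝ) ≤ p * a ^ p := by positivity
  calc ‖((a ^ p : ℝ) : ℂ) * (z₁ - z₂) + (((a ^ p - b ^ p : ℝ)) : ℂ) * z₂‖
      ≤ ‖((a ^ p : ℝ) : ℂ) * (z₁ - z₂)‖
          + ‖(((a ^ p - b ^ p : ℝ)) : ℂ) * z₂‖ := norm_add_le _ _
    _ = a ^ p * ‖z₁ - z₂‖ + (a ^ p - b ^ p) * b := by
        rw [norm_mul, norm_mul, Complex.norm_real, Complex.norm_real, Real.norm_eq_abs,
          Real.norm_eq_abs, abs_of_nonneg (Real.rpow_nonneg ha0 p), abs_of_nonneg (by linarith)]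
    _ ≤ a ^ p * ‖z₁ - z₂‖ + p * a ^ p * (a - b) :=
        add_le_add_right (key_rpow hp hb0 hle) _
    _ ≤ a ^ p * ‖z₁ - z₂‖ + p * a ^ p * ‖z₁ - z₂‖ :=
        add_le_add_right (mul_le_mul_of_nonneg_left habd hpanonneg) _
    _ = (p + 1) * a ^ p * ‖z₁ - z₂‖ := by ring
    _ ≤ (p + 1) * M ^ p * ‖z₁ - z₂‖ := by
        have : a ^ p ≤ M ^ p := Real.rpow_le_rpow ha0 h1 hp.le
        have h0 : (0:ℝ) ≤ ‖z₁ - z₂‖ := norm_nonneg _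
        have := mul_le_mul_of_nonneg_right
          (mul_le_mul_of_nonneg_left this (by linarith : (0:ℝ) ≤ p + 1)) h0
        linarith

/-- Lipschitz estimate in `L²` for the nonlinear operator
`B(v)(x) = V(x) v(x) + β |v(x)|^(2σ) v(x)` under `L^∞` bounds on `v` and `w`
(Lemma 3.3 of the paper). -/
theorem B_lipschitz_L2 {α : Type*} [MeasurableSpace α] (μ : Measure α)
    (V : α → ℝ) (hVmeas : Measurable V) (hVfin : eLpNorm V ⊤ μ < ⊤)
    (β σ : ℝ) (hσ : 0 < σ) (M : ℝ)
    (B : (α → ℂ) → (α → ℂ))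
    (hB : ∀ v : α → ℂ, ∀ x : α,
      B v x = (V x : ℂ) * v x + (β : ℂ) * (‖v x‖ ^ (2 * σ) : ℝ) * v x)
    (v w : α → ℂ) (hv : Measurable v) (hw : Measurable w)
    (hvM : ∀ᵐ x ∂μ, ‖v x‖ ≤ M)
    (hwM : ∀ᵐ x ∂μ, ‖w x‖ ≤ M) :
    eLpNorm (fun x => B v x - B w x) 2 μ
      ≤ (eLpNorm V ⊤ μ + ENNReal.ofReal ((2 * σ + 1) * |β| * M ^ (2 * σ)))
          * eLpNorm (fun x => v x - w x) 2 μ := by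
  rcases eq_or_ne μ 0 with rfl | hμ
  · simp [eLpNorm_measure_zero]
  haveI : (ae μ).NeBot := ae_neBot.mpr hμ
  have hM : 0 ≤ M := by
    obtain ⟨x, hx⟩ := hvM.exists
    exact (norm_nonneg _).trans hx
  set p : ℝ := 2 * σ with hp
  have hp0 : 0 < p := by positivity
  set K : ℝ := (eLpNorm V ⊤ μ).toReal with hK
  have hKnn : 0 ≤ K := ENNReal.toReal_nonneg
  have hVae : ∀ᵐ x ∂μ, |V x| ≤ K := by
    have h : ∀ᵐ x ∂μ, (‖V x‖₊ : ℝ≥0∞) ≤ eLpNormEssSup V μ := ae_le_eLpNormEssSup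
    filter_upwards [h] with x hx
    have h1 : (‖V x‖₊ : ℝ≥0∞) ≤ eLpNorm V ⊤ μ := by
      rw [eLpNorm_exponent_top]; exact hx
    have h2 := ENNReal.toReal_mono hVfin.ne h1
    simpa [Real.norm_eq_abs, hK] using h2
  set c : ℝ := (2 * σ + 1) * |β| * M ^ (2 * σ) with hc
  have hcnn : 0 ≤ c := by positivity
  set C : ℝ := K + c with hC
  have hCnn : 0 ≤ C := by positivity
  -- pointwise bound
  have hptwise : ∀ᵐ x ∂μ, ‖B v x - B w x‖ ≤ ‖(C : ℂ) * (v x - w x)‖ := by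
    filter_upwards [hvM, hwM, hVae] with x hvx hwx hVx
    have hsplit : B v x - B w x
        = (V x : ℂ) * (v x - w x)
          + (β : ℂ) * (((‖v x‖ ^ (2 * σ) : ℝ) : ℂ) * v x
              - ((‖w x‖ ^ (2 * σ) : ℝ) : ℂ) * w x) := by
      rw [hB, hB]; ring
    have hnl := nonlin_lip hp0 (v x) (w x) hvx hwx
    have hbound : ‖B v x - B w x‖ ≤ C * ‖v x - w x‖ := by
      rw [hsplit]
      calc ‖_‖
          ≤ ‖(V x : ℂ) * (v x - w x)‖
            + ‖(β : ℂ) * (((‖v x‖ ^ (2 * σ) : ℝ) : ℂ) * v x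
              - ((‖w x‖ ^ (2 * σ) : ℝ) : ℂ) * w x)‖ := norm_add_le _ _
        _ = |V x| * ‖v x - w x‖
            + |β| * ‖((‖v x‖ ^ (2 * σ) : ℝ) : ℂ) * v x
              - ((‖w x‖ ^ (2 * σ) : ℝ) : ℂ) * w x‖ := by
            rw [norm_mul, norm_mul, Complex.norm_real, Complex.norm_real, Real.norm_eq_abs,
              Real.norm_eq_abs]
        _ ≤ K * ‖v x - w x‖
            + |β| * ((p + 1) * M ^ p * ‖v x - w x‖) := by
            gcongr
        _ = (K + |β| * ((p + 1) * M ^ p)) * ‖v x - w x‖ := by ring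
        _ = C * ‖v x - w x‖ := by
            rw [hC, hc, hp]; ring_nf
    calc ‖B v x - B w x‖ = ‖B v x - B w x‖ := rfl
      _ ≤ C * ‖v x - w x‖ := hbound
      _ = ‖(C : ℂ) * (v x - w x)‖ := by
          rw [norm_mul, Complex.norm_real, Real.norm_eq_abs, abs_of_nonneg hCnn]
  calc eLpNorm (fun x => B v x - B w x) 2 μ
      ≤ eLpNorm (fun x => (C : ℂ) * (v x - w x)) 2 μ := eLpNorm_mono_ae hptwise
    _ = (‖(C : ℂ)‖₊ : ℝ≥0∞) * eLpNorm (fun x => v x - w x) 2 μ := by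
        rw [show (fun x => (C : ℂ) * (v x - w x)) = (C : ℂ) • (fun x => v x - w x) from
          funext fun x => by simp [smul_eq_mul]]
        exact eLpNorm_const_smul _ _ _ _
    _ ≤ (eLpNorm V ⊤ μ + ENNReal.ofReal ((2 * σ + 1) * |β| * M ^ (2 * σ)))
          * eLpNorm (fun x => v x - w x) 2 μ := by
        gcongr
        have h1 : (‖(C : ℂ)‖₊ : ℝ≥0∞) = ENNReal.ofReal C := by
          rw [← ENNReal.ofReal_coe_nnreal, coe_nnnorm, Complex.norm_real, Real.norm_eq_abs,
            abs_of_nonneg hCnn]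
        rw [h1, hC, ENNReal.ofReal_add hKnn hcnn, hK, ENNReal.ofReal_toReal hVfin.ne]
end

section
/- Let (α, μ) be a measure space, let V : α → ℝ be measurable with essential supremum ‖V‖_∞ < ∞, let β ∈ ℝ, σ > 0, and define, for measurable v, w : α → ℂ, dB(v)[w](x) = −i [ V(x) w(x) + β|v(x)|^(2σ) w(x) + βσ|v(x)|^(2σ) w(x) + G(v(x)) conj(w(x)) ], where G(z) = βσ |z|^(2σ−2) z² for z ≠ 0 and G(0) = 0. Then for all measurable v, w : α → ℂ with |v(x)| ≤ M almost everywhere, one has ‖dB(v)[w]‖_{L²} ≤ (‖V‖_∞ + (2σ+1)|β| M^(2σ)) ‖w‖_{L²}. -/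
open MeasureTheory

/-- Boundedness in `L²` of the Gâteaux derivative `dB(v)[w]` of the nonlinearity
operator `B(v) = V v + β |v|^(2σ) v`, under an `L^∞` bound on `v`
(Lemma 3.4 of the paper). -/
theorem dB_bounded_L2 {α : Type*} [MeasurableSpace α] (μ : Measure α)
    (V : α → ℝ) (hVmeas : Measurable V) (hVfin : eLpNorm V ⊤ μ < ⊤)
    (β σ : ℝ) (hσ : 0 < σ) (M : ℝ)
    (G : ℂ → ℂ)
    (hG : ∀ z : ℂ, G z = if z = 0 then 0
      else ((β * σ : ℝ) : ℂ) * (‖z‖ ^ (2 * σ - 2) : ℝ) * z ^ 2)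
    (dB : (α → ℂ) → (α → ℂ) → (α → ℂ))
    (hdB : ∀ v w : α → ℂ, ∀ x : α,
      dB v w x = -Complex.I *
        ((V x : ℂ) * w x
          + (β : ℂ) * (‖v x‖ ^ (2 * σ) : ℝ) * w x
          + ((β * σ : ℝ) : ℂ) * (‖v x‖ ^ (2 * σ) : ℝ) * w x
          + G (v x) * (starRingEnd ℂ) (w x)))
    (v w : α → ℂ) (hv : Measurable v) (hw : Measurable w)
    (hvM : ∀ᵐ x ∂μ, ‖v x‖ ≤ M) :
    eLpNorm (dB v w) 2 μ
      ≤ (eLpNorm V ⊤ μ + ENNReal.ofReal ((2 * σ + 1) * |β| * M ^ (2 * σ)))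
          * eLpNorm w 2 μ := by
  by_cases hμ : μ = 0
  · simp [hμ]
  -- M is nonnegative
  haveI : (ae μ).NeBot := ae_neBot.mpr hμ
  obtain ⟨x₀, hx₀⟩ := hvM.exists
  have hM : 0 ≤ M := le_trans (norm_nonneg _) hx₀
  set C : ℝ := (2 * σ + 1) * |β| * M ^ (2 * σ) with hC_def
  have hMσ : 0 ≤ M ^ (2 * σ) := Real.rpow_nonneg hM _
  have hC : 0 ≤ C := by
    apply mul_nonneg (mul_nonneg (by linarith) (abs_nonneg _)) hMσ
  set φ : α → ℝ := fun x => |V x| + C with hφ_def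
  -- pointwise bound
  have key : ∀ᵐ x ∂μ, ‖dB v w x‖ ≤ ‖(φ • w) x‖ := by
    filter_upwards [hvM] with x hx
    have hvxM : ‖v x‖ ^ (2 * σ) ≤ M ^ (2 * σ) :=
      Real.rpow_le_rpow (norm_nonneg _) hx (by linarith)
    have hvx0 : 0 ≤ ‖v x‖ ^ (2 * σ) := Real.rpow_nonneg (norm_nonneg _) _
    have hGle : ‖G (v x)‖ ≤ |β| * σ * M ^ (2 * σ) := by
      rw [hG]
      split_ifs with h
      · simp
        positivity
      · have habs : (0 : ℝ) < ‖v x‖ := by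
          simpa [norm_pos_iff] using h
        rw [norm_mul, norm_mul, Complex.norm_real, Complex.norm_real, Real.norm_eq_abs,
          Real.norm_eq_abs, abs_of_nonneg (Real.rpow_nonneg (norm_nonneg _) _),
          norm_pow]
        have : ‖v x‖ ^ (2 * σ - 2) * ‖v x‖ ^ 2
            = ‖v x‖ ^ (2 * σ) := by
          rw [← Real.rpow_natCast (‖v x‖) 2, ← Real.rpow_add habs]
          norm_num
        rw [mul_assoc, this, abs_mul, abs_of_nonneg hσ.le]
        have := mul_le_mul_of_nonneg_left hvxM (mul_nonneg (abs_nonneg β) hσ.le)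
        linarith
    have hnorm : ‖dB v w x‖ ≤ (|V x| + C) * ‖w x‖ := by
      rw [hdB, norm_mul]
      have hI : ‖-Complex.I‖ = 1 := by simp
      rw [hI, one_mul]
      calc ‖(V x : ℂ) * w x
          + (β : ℂ) * (‖v x‖ ^ (2 * σ) : ℝ) * w x
          + ((β * σ : ℝ) : ℂ) * (‖v x‖ ^ (2 * σ) : ℝ) * w x
          + G (v x) * (starRingEnd ℂ) (w x)‖
          ≤ ‖(V x : ℂ) * w x‖
            + ‖(β : ℂ) * (‖v x‖ ^ (2 * σ) : ℝ) * w x‖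
            + ‖((β * σ : ℝ) : ℂ) * (‖v x‖ ^ (2 * σ) : ℝ) * w x‖
            + ‖G (v x) * (starRingEnd ℂ) (w x)‖ := by
              exact le_trans (norm_add_le _ _) (by
                have h1 := norm_add_le ((V x : ℂ) * w x
                  + (β : ℂ) * (‖v x‖ ^ (2 * σ) : ℝ) * w x)
                  (((β * σ : ℝ) : ℂ) * (‖v x‖ ^ (2 * σ) : ℝ) * w x)
                have h2 := norm_add_le ((V x : ℂ) * w x)
                  ((β : ℂ) * (‖v x‖ ^ (2 * σ) : ℝ) * w x)
                linarith)
        _ ≤ (|V x| + C) * ‖w x‖ := by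
            rw [norm_mul, norm_mul, norm_mul, norm_mul, norm_mul, norm_mul,
              RingHomIsometric.norm_map]
            simp only [Complex.norm_real, Real.norm_eq_abs,
              abs_of_nonneg hvx0]
            have hw0 : (0 : ℝ) ≤ ‖w x‖ := norm_nonneg _
            have h1 : |β| * (‖v x‖ ^ (2 * σ)) ≤ |β| * M ^ (2 * σ) :=
              mul_le_mul_of_nonneg_left hvxM (abs_nonneg _)
            have h2 : |β * σ| * (‖v x‖ ^ (2 * σ)) ≤ |β| * σ * M ^ (2 * σ) := by
              rw [abs_mul, abs_of_nonneg hσ.le]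
              exact mul_le_mul_of_nonneg_left hvxM (mul_nonneg (abs_nonneg _) hσ.le)
            have h3 := mul_le_mul_of_nonneg_right hGle hw0
            nlinarith [mul_le_mul_of_nonneg_right h1 hw0, mul_le_mul_of_nonneg_right h2 hw0]
    calc ‖dB v w x‖ ≤ (|V x| + C) * ‖w x‖ := hnorm
      _ = ‖(φ • w) x‖ := by
          have h4 : (0:ℝ) ≤ |V x| + C := by positivity
          show (|V x| + C) * ‖w x‖ = ‖(|V x| + C) • w x‖
          rw [norm_smul, Real.norm_eq_abs, abs_of_nonneg h4]
  calc eLpNorm (dB v w) 2 μ ≤ eLpNorm (φ • w) 2 μ := eLpNorm_mono_ae key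
    _ ≤ eLpNorm φ ⊤ μ * eLpNorm w 2 μ :=
        eLpNorm_smul_le_eLpNorm_top_mul_eLpNorm 2 hw.aestronglyMeasurable φ
    _ ≤ (eLpNorm V ⊤ μ + ENNReal.ofReal C) * eLpNorm w 2 μ := by
        gcongr
        have : φ = (fun x => |V x|) + (fun _ => C) := rfl
        rw [this]
        refine (eLpNorm_add_le ((hVmeas.abs).aestronglyMeasurable)
          aestronglyMeasurable_const le_top).trans ?_
        have h1 : eLpNorm (fun x => |V x|) ⊤ μ = eLpNorm V ⊤ μ := by
          simpa using eLpNorm_norm (p := ⊤) (μ := μ) V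
        have h2 : eLpNorm (fun _ : α => C) ⊤ μ = ENNReal.ofReal C := by
          rw [eLpNorm_exponent_top, eLpNormEssSup_const C hμ, ← Real.enorm_eq_ofReal hC]
        rw [h1, h2]
end

section
/- Let σ ≥ 1/2, β ∈ ℝ and M > 0, and define G : ℂ → ℂ by G(z) = βσ |z|^(2σ−2) z² for z ≠ 0 and G(0) = 0. Then there exists a constant C > 0, depending only on σ, |β| and M, such that for all z₁, z₂ ∈ ℂ with |z₁| ≤ M and |z₂| ≤ M, one has |G(z₁) − G(z₂)| ≤ C |z₁ − z₂|. -/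
/-- Mean value estimate for real powers: for `-1 ≤ q` and `0 < b ≤ a`,
`|a^q - b^q| * b² ≤ |q| * a^(q+1) * (a - b)`. -/
lemma rpow_sub_rpow_mul_sq_le {q a b : ℝ} (hq : -1 ≤ q) (hb : 0 < b) (hba : b ≤ a) :
    |a ^ q - b ^ q| * b ^ 2 ≤ |q| * a ^ (q + 1) * (a - b) := by
  rcases eq_or_lt_of_le hba with rfl | h
  · simp
  have ha : 0 < a := hb.trans h
  obtain ⟨ξ, hξ, hder⟩ := exists_hasDerivAt_eq_slope (fun x : ℝ => x ^ q)
    (fun x : ℝ => q * x ^ (q - 1)) h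
    (fun x hx => (Real.continuousAt_rpow_const x q
      (Or.inl (ne_of_gt (hb.trans_le hx.1)))).continuousWithinAt)
    (fun x hx => Real.hasDerivAt_rpow_const (Or.inl (ne_of_gt (hb.trans hx.1))))
  have hξb : b < ξ := hξ.1
  have hξa : ξ < a := hξ.2
  have hξ0 : 0 < ξ := hb.trans hξb
  have hab : a ^ q - b ^ q = q * ξ ^ (q - 1) * (a - b) := by
    have hne : a - b ≠ 0 := sub_ne_zero.mpr h.ne'
    rw [eq_div_iff hne] at hder
    linarith [hder]
  have habs : |a ^ q - b ^ q| = |q| * ξ ^ (q - 1) * (a - b) := by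
    rw [hab, abs_mul, abs_mul, abs_of_pos (sub_pos.mpr h),
      abs_of_pos (Real.rpow_pos_of_pos hξ0 _)]
  rw [habs]
  have key : ξ ^ (q - 1) * b ^ 2 ≤ a ^ (q + 1) := by
    rcases le_total q 1 with hq1 | hq1
    · have h1 : ξ ^ (q - 1) ≤ b ^ (q - 1) :=
        Real.rpow_le_rpow_of_nonpos hb hξb.le (by linarith)
      have h2 : b ^ (q - 1) * b ^ 2 = b ^ (q + 1) := by
        rw [← Real.rpow_natCast b 2, ← Real.rpow_add hb]
        congr 1; push_cast; ring
      have h3 : b ^ (q + 1) ≤ a ^ (q + 1) :=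
        Real.rpow_le_rpow hb.le hba (by linarith)
      calc ξ ^ (q - 1) * b ^ 2 ≤ b ^ (q - 1) * b ^ 2 := by
            have : (0:ℝ) ≤ b ^ 2 := sq_nonneg b
            nlinarith
        _ = b ^ (q + 1) := h2
        _ ≤ a ^ (q + 1) := h3
    · have h1 : ξ ^ (q - 1) ≤ a ^ (q - 1) :=
        Real.rpow_le_rpow hξ0.le hξa.le (by linarith)
      have h2 : b ^ 2 ≤ a ^ 2 := by nlinarith
      have h3 : a ^ (q - 1) * a ^ 2 = a ^ (q + 1) := by
        rw [← Real.rpow_natCast a 2, ← Real.rpow_add ha]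
        congr 1; push_cast; ring
      calc ξ ^ (q - 1) * b ^ 2 ≤ a ^ (q - 1) * a ^ 2 := by
            have hξq : (0:ℝ) ≤ ξ ^ (q - 1) := (Real.rpow_pos_of_pos hξ0 _).le
            have haq : (0:ℝ) ≤ a ^ (q - 1) := (Real.rpow_pos_of_pos ha _).le
            nlinarith
        _ = a ^ (q + 1) := h3
  calc |q| * ξ ^ (q - 1) * (a - b) * b ^ 2
      = |q| * (ξ ^ (q - 1) * b ^ 2) * (a - b) := by ring
    _ ≤ |q| * a ^ (q + 1) * (a - b) := by
        exact mul_le_mul_of_nonneg_right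
          (mul_le_mul_of_nonneg_left key (abs_nonneg q)) (sub_pos.mpr h).le

/-- Pointwise estimate for `g(z) = |z|^(p-2) z²` when both points are nonzero. -/
lemma g_est {p : ℝ} (hp : 1 ≤ p) {z₁ z₂ : ℂ}
    (hba : ‖z₂‖ ≤ ‖z₁‖) (hb : 0 < ‖z₂‖) :
    ‖((‖z₁‖ ^ (p - 2) : ℝ) : ℂ) * z₁ ^ 2
        - ((‖z₂‖ ^ (p - 2) : ℝ) : ℂ) * z₂ ^ 2‖
      ≤ (2 + |p - 2|) * ‖z₁‖ ^ (p - 1) * ‖z₁ - z₂‖ := by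
  set a := ‖z₁‖ with ha_def
  set b := ‖z₂‖ with hb_def
  have ha : 0 < a := hb.trans_le hba
  set d := ‖z₁ - z₂‖ with hd_def
  have hd : 0 ≤ d := norm_nonneg _
  have decomp : ((a ^ (p - 2) : ℝ) : ℂ) * z₁ ^ 2 - ((b ^ (p - 2) : ℝ) : ℂ) * z₂ ^ 2
      = ((a ^ (p - 2) : ℝ) : ℂ) * (z₁ ^ 2 - z₂ ^ 2)
        + ((a ^ (p - 2) - b ^ (p - 2) : ℝ) : ℂ) * z₂ ^ 2 := by
    push_cast; ring
  rw [decomp]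
  have tri := norm_add_le (((a ^ (p - 2) : ℝ) : ℂ) * (z₁ ^ 2 - z₂ ^ 2))
    (((a ^ (p - 2) - b ^ (p - 2) : ℝ) : ℂ) * z₂ ^ 2)
  refine tri.trans ?_
  -- first term
  have hsum : ‖z₁ + z₂‖ ≤ 2 * a := by
    refine (norm_add_le z₁ z₂).trans ?_
    rw [← ha_def, ← hb_def]; linarith
  have hfirst : ‖((a ^ (p - 2) : ℝ) : ℂ) * (z₁ ^ 2 - z₂ ^ 2)‖
      ≤ 2 * a ^ (p - 1) * d := by
    have hsq : z₁ ^ 2 - z₂ ^ 2 = (z₁ + z₂) * (z₁ - z₂) := by ring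
    rw [norm_mul, Complex.norm_real, Real.norm_eq_abs, abs_of_pos (Real.rpow_pos_of_pos ha _),
      hsq, norm_mul, ← hd_def]
    have h1 : ‖z₁ + z₂‖ * d ≤ 2 * a * d := by
      exact mul_le_mul_of_nonneg_right hsum hd
    have h2 : a ^ (p - 2) * (2 * a * d) = 2 * a ^ (p - 1) * d := by
      have : a ^ (p - 2) * a = a ^ (p - 1) := by
        rw [← Real.rpow_add_one ha.ne' (p - 2)]; congr 1; ring
      calc a ^ (p - 2) * (2 * a * d) = 2 * (a ^ (p - 2) * a) * d := by ring
        _ = 2 * a ^ (p - 1) * d := by rw [this]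
    calc a ^ (p - 2) * (‖z₁ + z₂‖ * d)
        ≤ a ^ (p - 2) * (2 * a * d) := by
          exact mul_le_mul_of_nonneg_left h1 (Real.rpow_pos_of_pos ha _).le
      _ = 2 * a ^ (p - 1) * d := h2
  -- second term
  have hsecond : ‖((a ^ (p - 2) - b ^ (p - 2) : ℝ) : ℂ) * z₂ ^ 2‖
      ≤ |p - 2| * a ^ (p - 1) * d := by
    rw [norm_mul, Complex.norm_real, Real.norm_eq_abs, norm_pow, ← hb_def]
    have hmvt := rpow_sub_rpow_mul_sq_le (q := p - 2) (a := a) (b := b)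
      (by linarith) hb hba
    have hab_le_d : a - b ≤ d := by
      have := norm_sub_norm_le z₁ z₂
      rw [← ha_def, ← hb_def, ← hd_def] at this
      exact this
    have hq1 : p - 2 + 1 = p - 1 := by ring
    rw [hq1] at hmvt
    refine hmvt.trans ?_
    have : (0:ℝ) ≤ |p - 2| * a ^ (p - 1) :=
      mul_nonneg (abs_nonneg _) (Real.rpow_pos_of_pos ha _).le
    exact mul_le_mul_of_nonneg_left hab_le_d this
  calc ‖((a ^ (p - 2) : ℝ) : ℂ) * (z₁ ^ 2 - z₂ ^ 2)‖
      + ‖((a ^ (p - 2) - b ^ (p - 2) : ℝ) : ℂ) * z₂ ^ 2‖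
      ≤ 2 * a ^ (p - 1) * d + |p - 2| * a ^ (p - 1) * d := add_le_add hfirst hsecond
    _ = (2 + |p - 2|) * a ^ (p - 1) * d := by ring

/-- Pointwise Lipschitz estimate, for `σ ≥ 1/2`, of the function
`G(z) = βσ |z|^(2σ−2) z²` (with `G(0) = 0`) on the closed disk of radius `M`
(key ingredient of Lemma 4.2 of the paper). -/
theorem G_lipschitz (σ β M : ℝ) (hσ : 1 / 2 ≤ σ) (hM : 0 < M)
    (G : ℂ → ℂ)
    (hG : ∀ z : ℂ, G z = if z = 0 then 0
      else ((β * σ : ℝ) : ℂ) * (‖z‖ ^ (2 * σ - 2) : ℝ) * z ^ 2) :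
    ∃ C : ℝ, 0 < C ∧ ∀ z₁ z₂ : ℂ, ‖z₁‖ ≤ M → ‖z₂‖ ≤ M →
      ‖G z₁ - G z₂‖ ≤ C * ‖z₁ - z₂‖ := by
  set p : ℝ := 2 * σ with hp_def
  have hp : 1 ≤ p := by simp only [hp_def]; linarith
  set C : ℝ := |β * σ| * (2 + |p - 2|) * M ^ (p - 1) + 1 with hC_def
  have hMp : 0 < M ^ (p - 1) := Real.rpow_pos_of_pos hM _
  have hC : 0 < C := by
    have h1 : (0:ℝ) ≤ |β * σ| * (2 + |p - 2|) * M ^ (p - 1) := by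
      apply mul_nonneg (mul_nonneg (abs_nonneg _) (by positivity)) hMp.le
    linarith
  refine ⟨C, hC, ?_⟩
  -- key claim assuming |z₂| ≤ |z₁|
  have key : ∀ z₁ z₂ : ℂ, ‖z₁‖ ≤ M → ‖z₂‖ ≤ M →
      ‖z₂‖ ≤ ‖z₁‖ →
      ‖G z₁ - G z₂‖ ≤ C * ‖z₁ - z₂‖ := by
    intro z₁ z₂ h1 h2 hba
    by_cases hz1 : z₁ = 0
    · have hz2 : z₂ = 0 := by
        have : ‖z₂‖ ≤ 0 := by simpa [hz1] using hba
        exact norm_eq_zero.mp (le_antisymm this (norm_nonneg _))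
      simp [hG, hz1, hz2]
    have ha : 0 < ‖z₁‖ := norm_pos_iff.mpr hz1
    have ha1 : ‖z₁‖ ^ (p - 1) ≤ M ^ (p - 1) :=
      Real.rpow_le_rpow ha.le h1 (by linarith)
    by_cases hz2 : z₂ = 0
    · -- G z₂ = 0
      have hb0 : ‖z₂‖ = 0 := by simp [hz2]
      rw [hG z₁, hG z₂, if_neg hz1, if_pos hz2, sub_zero]
      rw [norm_mul, norm_mul, Complex.norm_real, Real.norm_eq_abs, Complex.norm_real, Real.norm_eq_abs, norm_pow,
        abs_of_pos (Real.rpow_pos_of_pos ha _)]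
      have hd : ‖z₁ - z₂‖ = ‖z₁‖ := by simp [hz2]
      rw [hd]
      have hpow : ‖z₁‖ ^ (2 * σ - 2) * ‖z₁‖ ^ 2
          = ‖z₁‖ ^ (p - 1) * ‖z₁‖ := by
        rw [← Real.rpow_natCast (‖z₁‖) 2, ← Real.rpow_add ha,
          ← Real.rpow_add_one ha.ne' (p - 1)]
        congr 1; push_cast; rw [hp_def]; ring
      calc |β * σ| * ‖z₁‖ ^ (2 * σ - 2) * ‖z₁‖ ^ 2
          = |β * σ| * (‖z₁‖ ^ (p - 1) * ‖z₁‖) := by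
            rw [mul_assoc, hpow]
        _ = (|β * σ| * ‖z₁‖ ^ (p - 1)) * ‖z₁‖ := by ring
        _ ≤ (|β * σ| * M ^ (p - 1)) * ‖z₁‖ := by
            exact mul_le_mul_of_nonneg_right
              (mul_le_mul_of_nonneg_left ha1 (abs_nonneg _)) ha.le
        _ ≤ C * ‖z₁‖ := by
            apply mul_le_mul_of_nonneg_right _ ha.le
            rw [hC_def]
            nlinarith [mul_nonneg (mul_nonneg (abs_nonneg (β * σ)) (abs_nonneg (p - 2))) hMp.le,
              mul_nonneg (abs_nonneg (β * σ)) hMp.le]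
    · have hb : 0 < ‖z₂‖ := norm_pos_iff.mpr hz2
      have hdiff : G z₁ - G z₂ = ((β * σ : ℝ) : ℂ) *
          (((‖z₁‖ ^ (p - 2) : ℝ) : ℂ) * z₁ ^ 2
            - ((‖z₂‖ ^ (p - 2) : ℝ) : ℂ) * z₂ ^ 2) := by
        rw [hG z₁, hG z₂, if_neg hz1, if_neg hz2]
        have : 2 * σ - 2 = p - 2 := by rw [hp_def]
        rw [this]; ring
      rw [hdiff, norm_mul, Complex.norm_real, Real.norm_eq_abs]
      have hest := g_est hp hba hb
      calc |β * σ| * ‖((‖z₁‖ ^ (p - 2) : ℝ) : ℂ) * z₁ ^ 2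
            - ((‖z₂‖ ^ (p - 2) : ℝ) : ℂ) * z₂ ^ 2‖
          ≤ |β * σ| * ((2 + |p - 2|) * ‖z₁‖ ^ (p - 1) * ‖z₁ - z₂‖) :=
            mul_le_mul_of_nonneg_left hest (abs_nonneg _)
        _ ≤ C * ‖z₁ - z₂‖ := by
            have h2p : (0:ℝ) ≤ 2 + |p - 2| := by positivity
            have hd : (0:ℝ) ≤ ‖z₁ - z₂‖ := norm_nonneg _
            have : |β * σ| * ((2 + |p - 2|) * ‖z₁‖ ^ (p - 1))
                ≤ C := by
              rw [hC_def]
              nlinarith [mul_nonneg (mul_nonneg (abs_nonneg (β * σ)) h2p)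
                (sub_nonneg.mpr ha1)]
            calc |β * σ| * ((2 + |p - 2|) * ‖z₁‖ ^ (p - 1) * ‖z₁ - z₂‖)
                = (|β * σ| * ((2 + |p - 2|) * ‖z₁‖ ^ (p - 1))) * ‖z₁ - z₂‖ := by
                  ring
              _ ≤ C * ‖z₁ - z₂‖ := mul_le_mul_of_nonneg_right this hd
  intro z₁ z₂ h1 h2
  rcases le_total (‖z₂‖) (‖z₁‖) with h | h
  · exact key z₁ z₂ h1 h2 h
  · have := key z₂ z₁ h2 h1 h
    rwa [← norm_neg (G z₂ - G z₁), neg_sub, ← norm_neg (z₂ - z₁), neg_sub]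
      at this
end

section
/- Let (α, μ) be a measure space, let V : α → ℝ be measurable with essential supremum ‖V‖_∞ < ∞, let β ∈ ℝ, σ ≥ 1/2, and define dB(v)[w](x) = −i [ V(x) w(x) + β|v(x)|^(2σ) w(x) + βσ|v(x)|^(2σ) w(x) + G(v(x)) conj(w(x)) ], where G(z) = βσ |z|^(2σ−2) z² for z ≠ 0 and G(0) = 0. Then there exists C > 0, depending only on ‖V‖_∞, σ, |β| and M, such that for all measurable v₁, v₂, w₁, w₂ : α → ℂ with |vⱼ(x)| ≤ M and |wⱼ(x)| ≤ M almost everywhere (j = 1, 2), one has ‖dB(v₁)[w₁] − dB(v₂)[w₂]‖_{L²} ≤ C ( ‖v₁ − v₂‖_{L²} + ‖w₁ − w₂‖_{L²} ). -/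
open MeasureTheory



/-- MVT Lipschitz bound for `x ^ p`, `p ≥ 1`, on `[0, M]`. -/
lemma aux_rpow_lip {p M a b : ℝ} (hp : 1 ≤ p) (ha0 : 0 ≤ a) (hb0 : 0 ≤ b)
    (ha : a ≤ M) (hb : b ≤ M) : |a ^ p - b ^ p| ≤ p * M ^ (p - 1) * |a - b| := by
  have hM : 0 ≤ M := le_trans ha0 ha
  have hderiv : ∀ x ∈ Set.Icc (0:ℝ) M,
      HasDerivWithinAt (fun y : ℝ => y ^ p) (p * x ^ (p - 1)) (Set.Icc (0:ℝ) M) x :=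
    fun x _ => (Real.hasDerivAt_rpow_const (Or.inr hp)).hasDerivWithinAt
  have hbound : ∀ x ∈ Set.Icc (0:ℝ) M, ‖p * x ^ (p - 1)‖ ≤ p * M ^ (p - 1) := by
    intro x hx
    rw [Real.norm_eq_abs,
      abs_of_nonneg (mul_nonneg (by linarith) (Real.rpow_nonneg hx.1 _))]
    have := Real.rpow_le_rpow hx.1 hx.2 (by linarith : (0:ℝ) ≤ p - 1)
    nlinarith
  have := (convex_Icc (0:ℝ) M).norm_image_sub_le_of_norm_hasDerivWithin_le
    hderiv hbound ⟨hb0, hb⟩ ⟨ha0, ha⟩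
  simpa [Real.norm_eq_abs] using this

/-- key bound for the second term in the `φ` Lipschitz estimate. -/
lemma aux_B {p r₁ r₂ : ℝ} (hp : -1 ≤ p) (h2 : 0 < r₂) (h12 : r₂ ≤ r₁) :
    |r₁ ^ p - r₂ ^ p| * r₂ ^ (2:ℕ) ≤ |p| * r₁ ^ (p + 1) * (r₁ - r₂) := by
  have h1 : 0 < r₁ := lt_of_lt_of_le h2 h12
  set B : ℝ := if p ≤ 1 then r₂ ^ (p - 1) else r₁ ^ (p - 1) with hB
  have hderiv : ∀ x ∈ Set.Icc r₂ r₁,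
      HasDerivWithinAt (fun y : ℝ => y ^ p) (p * x ^ (p - 1)) (Set.Icc r₂ r₁) x :=
    fun x hx => (Real.hasDerivAt_rpow_const (Or.inl (by linarith [hx.1] : x ≠ 0))).hasDerivWithinAt
  have hbound : ∀ x ∈ Set.Icc r₂ r₁, ‖p * x ^ (p - 1)‖ ≤ |p| * B := by
    intro x hx
    have hx0 : 0 < x := lt_of_lt_of_le h2 hx.1
    rw [Real.norm_eq_abs, abs_mul, abs_of_nonneg (Real.rpow_nonneg hx0.le _)]
    have hxB : x ^ (p - 1) ≤ B := by
      rw [hB]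
      split_ifs with h
      · exact Real.rpow_le_rpow_of_nonpos h2 hx.1 (by linarith)
      · exact Real.rpow_le_rpow hx0.le hx.2 (by linarith)
    exact mul_le_mul_of_nonneg_left hxB (abs_nonneg p)
  have hmvt := (convex_Icc r₂ r₁).norm_image_sub_le_of_norm_hasDerivWithin_le
    hderiv hbound ⟨le_refl r₂, h12⟩ ⟨h12, le_refl r₁⟩
  rw [Real.norm_eq_abs, Real.norm_eq_abs, abs_of_nonneg (by linarith : (0:ℝ) ≤ r₁ - r₂)] at hmvt
  have hBr : B * r₂ ^ (2:ℕ) ≤ r₁ ^ (p + 1) := by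
    rw [hB]
    split_ifs with h
    · calc r₂ ^ (p - 1) * r₂ ^ (2:ℕ) = r₂ ^ (p + 1) := by
            rw [← Real.rpow_natCast r₂ 2, ← Real.rpow_add h2]; congr 1; ring
        _ ≤ r₁ ^ (p + 1) := Real.rpow_le_rpow h2.le h12 (by linarith)
    · calc r₁ ^ (p - 1) * r₂ ^ (2:ℕ) ≤ r₁ ^ (p - 1) * r₁ ^ (2:ℕ) := by
            have := Real.rpow_nonneg h1.le (p - 1)
            have h12' : r₂ ^ (2:ℕ) ≤ r₁ ^ (2:ℕ) := by nlinarith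
            nlinarith
        _ = r₁ ^ (p + 1) := by
            rw [← Real.rpow_natCast r₁ 2, ← Real.rpow_add h1]; congr 1; ring
  have hr2 : (0:ℝ) ≤ r₂ ^ (2:ℕ) := by positivity
  have hpB : 0 ≤ |p| := abs_nonneg p
  calc |r₁ ^ p - r₂ ^ p| * r₂ ^ (2:ℕ) ≤ (|p| * B * (r₁ - r₂)) * r₂ ^ (2:ℕ) :=
        mul_le_mul_of_nonneg_right hmvt hr2
    _ = |p| * (B * r₂ ^ (2:ℕ)) * (r₁ - r₂) := by ring
    _ ≤ |p| * r₁ ^ (p + 1) * (r₁ - r₂) := by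
        have hB0 : 0 ≤ B := by
          rw [hB]; split_ifs
          · exact Real.rpow_nonneg h2.le _
          · exact Real.rpow_nonneg h1.le _
        exact mul_le_mul_of_nonneg_right
          (mul_le_mul_of_nonneg_left hBr hpB) (by linarith)

noncomputable def auxPhi (σ : ℝ) (z : ℂ) : ℂ :=
  if z = 0 then 0 else ((‖z‖ ^ (2 * σ - 2) : ℝ) : ℂ) * z ^ 2

lemma aux_phi_bd {σ Mr : ℝ} (hσ : 1 / 2 ≤ σ) (hM : 1 ≤ Mr) {z : ℂ}
    (hz : ‖z‖ ≤ Mr) : ‖auxPhi σ z‖ ≤ Mr ^ (2 * σ) := by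
  by_cases h : z = 0
  · simp [auxPhi, h]; positivity
  · have hr : 0 < ‖z‖ := norm_pos_iff.mpr h
    rw [auxPhi, if_neg h, norm_mul, Complex.norm_real, Real.norm_eq_abs, norm_pow,
      abs_of_nonneg (Real.rpow_nonneg hr.le _)]
    have : ‖z‖ ^ (2 * σ - 2) * ‖z‖ ^ (2:ℕ)
        = ‖z‖ ^ (2 * σ) := by
      rw [← Real.rpow_natCast _ 2, ← Real.rpow_add hr]; congr 1; push_cast; ring
    rw [this]
    exact Real.rpow_le_rpow hr.le hz (by linarith)

lemma aux_phi_ord {σ Mr : ℝ} (hσ : 1 / 2 ≤ σ) (hM : 1 ≤ Mr) {z₁ z₂ : ℂ}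
    (h1 : ‖z₁‖ ≤ Mr) (hord : ‖z₂‖ ≤ ‖z₁‖) :
    ‖auxPhi σ z₁ - auxPhi σ z₂‖
      ≤ (2 + 2 * σ) * Mr ^ (2 * σ - 1) * ‖z₁ - z₂‖ := by
  set r₁ := ‖z₁‖ with hr₁
  set r₂ := ‖z₂‖ with hr₂
  have hMr : (0:ℝ) < Mr := by linarith
  have hMrp : (0:ℝ) ≤ Mr ^ (2 * σ - 1) := Real.rpow_nonneg hMr.le _
  by_cases hz1 : z₁ = 0
  · have hz2 : z₂ = 0 := by
      have : r₂ ≤ 0 := by simpa [hr₁, hz1] using hord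
      exact norm_eq_zero.mp (le_antisymm this (norm_nonneg _))
    simp [auxPhi, hz1, hz2]
  · have hr1pos : 0 < r₁ := norm_pos_iff.mpr hz1
    have hr1M : r₁ ^ (2 * σ - 1) ≤ Mr ^ (2 * σ - 1) :=
      Real.rpow_le_rpow hr1pos.le h1 (by linarith)
    by_cases hz2 : z₂ = 0
    · have hφ2 : auxPhi σ z₂ = 0 := by simp [auxPhi, hz2]
      rw [hφ2, sub_zero, hz2, sub_zero]
      rw [auxPhi, if_neg hz1, norm_mul, Complex.norm_real, Real.norm_eq_abs, norm_pow,
        abs_of_nonneg (Real.rpow_nonneg hr1pos.le _)]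
      have key : r₁ ^ (2 * σ - 2) * r₁ ^ (2:ℕ) = r₁ ^ (2 * σ - 1) * r₁ := by
        rw [← Real.rpow_natCast _ 2, ← Real.rpow_add hr1pos,
          ← Real.rpow_add_one hr1pos.ne' (2 * σ - 1)]
        congr 1; push_cast; ring
      rw [key, ← hr₁]
      nlinarith [mul_le_mul_of_nonneg_right hr1M hr1pos.le,
        mul_nonneg hMrp hr1pos.le]
    · have hr2pos : 0 < r₂ := norm_pos_iff.mpr hz2
      set d := ‖z₁ - z₂‖ with hd
      have hd0 : 0 ≤ d := norm_nonneg _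
      have hdec : auxPhi σ z₁ - auxPhi σ z₂
          = ((r₁ ^ (2 * σ - 2) : ℝ) : ℂ) * (z₁ ^ 2 - z₂ ^ 2)
            + (((r₁ ^ (2 * σ - 2) - r₂ ^ (2 * σ - 2) : ℝ)) : ℂ) * z₂ ^ 2 := by
        simp only [auxPhi, if_neg hz1, if_neg hz2]
        push_cast
        ring
      have hsubd : r₁ - r₂ ≤ d := by
        have := abs_norm_sub_norm_le z₁ z₂
        rw [← hr₁, ← hr₂, ← hd] at this
        exact le_trans (le_abs_self _) this
      have hfirst : ‖((r₁ ^ (2 * σ - 2) : ℝ) : ℂ) * (z₁ ^ 2 - z₂ ^ 2)‖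
          ≤ 2 * Mr ^ (2 * σ - 1) * d := by
        rw [norm_mul, Complex.norm_real, Real.norm_eq_abs,
          abs_of_nonneg (Real.rpow_nonneg hr1pos.le _)]
        have hfac : z₁ ^ 2 - z₂ ^ 2 = (z₁ - z₂) * (z₁ + z₂) := by ring
        rw [hfac, norm_mul]
        have hsum : ‖z₁ + z₂‖ ≤ 2 * r₁ := by
          calc ‖z₁ + z₂‖ ≤ r₁ + r₂ := norm_add_le _ _
            _ ≤ 2 * r₁ := by linarith
        have hstep : r₁ ^ (2 * σ - 2) * r₁ = r₁ ^ (2 * σ - 1) := by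
          rw [← Real.rpow_add_one hr1pos.ne']; congr 1; ring
        calc r₁ ^ (2 * σ - 2) * (d * ‖z₁ + z₂‖)
            ≤ r₁ ^ (2 * σ - 2) * (d * (2 * r₁)) :=
              mul_le_mul_of_nonneg_left (mul_le_mul_of_nonneg_left hsum hd0)
                (Real.rpow_nonneg hr1pos.le _)
          _ = 2 * (r₁ ^ (2 * σ - 1)) * d := by rw [← hstep]; ring
          _ ≤ 2 * Mr ^ (2 * σ - 1) * d := by
              nlinarith [mul_le_mul_of_nonneg_right hr1M hd0]
      have hsecond : ‖(((r₁ ^ (2 * σ - 2) - r₂ ^ (2 * σ - 2) : ℝ)) : ℂ) * z₂ ^ 2‖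
          ≤ 2 * σ * Mr ^ (2 * σ - 1) * d := by
        rw [norm_mul, Complex.norm_real, Real.norm_eq_abs, norm_pow]
        have hB := aux_B (p := 2 * σ - 2) (by linarith) hr2pos hord
        have hstep : r₁ ^ (2 * σ - 2 + 1) = r₁ ^ (2 * σ - 1) := by congr 1; ring
        rw [hstep] at hB
        have habs : |2 * σ - 2| ≤ 2 * σ := by
          rw [abs_le]; constructor <;> linarith
        calc |r₁ ^ (2 * σ - 2) - r₂ ^ (2 * σ - 2)| * r₂ ^ (2:ℕ)
            ≤ |2 * σ - 2| * r₁ ^ (2 * σ - 1) * (r₁ - r₂) := hB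
          _ ≤ 2 * σ * r₁ ^ (2 * σ - 1) * (r₁ - r₂) := by
              have h1' := Real.rpow_nonneg hr1pos.le (2 * σ - 1)
              have hrr : (0:ℝ) ≤ r₁ - r₂ := by linarith [hord]
              exact mul_le_mul_of_nonneg_right
                (mul_le_mul_of_nonneg_right habs h1') hrr
          _ ≤ 2 * σ * Mr ^ (2 * σ - 1) * (r₁ - r₂) := by
              have hσ0 : (0:ℝ) ≤ 2 * σ := by linarith
              have hrr : (0:ℝ) ≤ r₁ - r₂ := by linarith [hord]
              nlinarith [mul_le_mul_of_nonneg_left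
                (mul_le_mul_of_nonneg_right hr1M hrr) hσ0]
          _ ≤ 2 * σ * Mr ^ (2 * σ - 1) * d := by
              have hσ0 : (0:ℝ) ≤ 2 * σ := by linarith
              exact mul_le_mul_of_nonneg_left hsubd (mul_nonneg hσ0 hMrp)
      calc ‖auxPhi σ z₁ - auxPhi σ z₂‖
          ≤ ‖((r₁ ^ (2 * σ - 2) : ℝ) : ℂ) * (z₁ ^ 2 - z₂ ^ 2)‖
            + ‖(((r₁ ^ (2 * σ - 2) - r₂ ^ (2 * σ - 2) : ℝ)) : ℂ) * z₂ ^ 2‖ := by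
            rw [hdec]; exact norm_add_le _ _
        _ ≤ 2 * Mr ^ (2 * σ - 1) * d + 2 * σ * Mr ^ (2 * σ - 1) * d := by linarith
        _ = (2 + 2 * σ) * Mr ^ (2 * σ - 1) * d := by ring

lemma aux_phi {σ Mr : ℝ} (hσ : 1 / 2 ≤ σ) (hM : 1 ≤ Mr) {z₁ z₂ : ℂ}
    (h1 : ‖z₁‖ ≤ Mr) (h2 : ‖z₂‖ ≤ Mr) :
    ‖auxPhi σ z₁ - auxPhi σ z₂‖
      ≤ (2 + 2 * σ) * Mr ^ (2 * σ - 1) * ‖z₁ - z₂‖ := by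
  rcases le_total (‖z₂‖) (‖z₁‖) with h | h
  · exact aux_phi_ord hσ hM h1 h
  · rw [norm_sub_rev, norm_sub_rev z₁ z₂]
    exact aux_phi_ord hσ hM h2 h

set_option maxHeartbeats 1000000 in
/-- Joint Lipschitz estimate in `L²` of the Gâteaux derivative `dB(v)[w]` of the
nonlinearity operator `B(v) = V v + β |v|^(2σ) v`, for `σ ≥ 1/2`, under `L^∞`
bounds on the arguments (Lemma 4.2 of the paper). -/
theorem dB_joint_lipschitz_L2 {α : Type*} [MeasurableSpace α] (μ : Measure α)
    (V : α → ℝ) (hVmeas : Measurable V) (hVfin : eLpNorm V ⊤ μ < ⊤)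
    (β σ : ℝ) (hσ : 1 / 2 ≤ σ) (M : ℝ)
    (G : ℂ → ℂ)
    (hG : ∀ z : ℂ, G z = if z = 0 then 0
      else ((β * σ : ℝ) : ℂ) * (‖z‖ ^ (2 * σ - 2) : ℝ) * z ^ 2)
    (dB : (α → ℂ) → (α → ℂ) → (α → ℂ))
    (hdB : ∀ v w : α → ℂ, ∀ x : α,
      dB v w x = -Complex.I *
        ((V x : ℂ) * w x
          + (β : ℂ) * (‖v x‖ ^ (2 * σ) : ℝ) * w x
          + ((β * σ : ℝ) : ℂ) * (‖v x‖ ^ (2 * σ) : ℝ) * w x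
          + G (v x) * (starRingEnd ℂ) (w x))) :
    ∃ C : ℝ, 0 < C ∧
      ∀ v₁ v₂ w₁ w₂ : α → ℂ,
        Measurable v₁ → Measurable v₂ → Measurable w₁ → Measurable w₂ →
        (∀ᵐ x ∂μ, ‖v₁ x‖ ≤ M) → (∀ᵐ x ∂μ, ‖v₂ x‖ ≤ M) →
        (∀ᵐ x ∂μ, ‖w₁ x‖ ≤ M) → (∀ᵐ x ∂μ, ‖w₂ x‖ ≤ M) →
        eLpNorm (fun x => dB v₁ w₁ x - dB v₂ w₂ x) 2 μ
          ≤ ENNReal.ofReal C *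
              (eLpNorm (fun x => v₁ x - v₂ x) 2 μ + eLpNorm (fun x => w₁ x - w₂ x) 2 μ) := by
  -- notation and constants
  set K : ℝ := (eLpNormEssSup V μ).toReal with hKdef
  have hK0 : 0 ≤ K := ENNReal.toReal_nonneg
  set Mr : ℝ := max M 1 with hMrdef
  have hMr1 : (1:ℝ) ≤ Mr := le_max_right _ _
  have hMr0 : (0:ℝ) < Mr := by linarith
  have hA1 : (0:ℝ) ≤ Mr ^ (2 * σ) := Real.rpow_nonneg hMr0.le _
  have hB1 : (0:ℝ) ≤ Mr ^ (2 * σ - 1) := Real.rpow_nonneg hMr0.le _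
  have hσ0 : (0:ℝ) ≤ 2 * σ := by linarith
  set C₀ : ℝ := K + (|β| + 2 * |β * σ|) * Mr ^ (2 * σ)
      + |β| * (2 * σ) * Mr ^ (2 * σ - 1) * Mr
      + |β * σ| * (2 * σ) * Mr ^ (2 * σ - 1) * Mr
      + |β * σ| * ((2 + 2 * σ) * Mr ^ (2 * σ - 1)) * Mr with hC₀def
  have hC₀0 : 0 ≤ C₀ := by
    have h1 : (0:ℝ) ≤ (|β| + 2 * |β * σ|) * Mr ^ (2 * σ) :=
      mul_nonneg (by positivity) hA1
    have h2 : (0:ℝ) ≤ |β| * (2 * σ) * Mr ^ (2 * σ - 1) * Mr :=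
      mul_nonneg (mul_nonneg (mul_nonneg (abs_nonneg _) hσ0) hB1) hMr0.le
    have h3 : (0:ℝ) ≤ |β * σ| * (2 * σ) * Mr ^ (2 * σ - 1) * Mr :=
      mul_nonneg (mul_nonneg (mul_nonneg (abs_nonneg _) hσ0) hB1) hMr0.le
    have h4 : (0:ℝ) ≤ |β * σ| * ((2 + 2 * σ) * Mr ^ (2 * σ - 1)) * Mr :=
      mul_nonneg (mul_nonneg (abs_nonneg _) (mul_nonneg (by linarith) hB1)) hMr0.le
    linarith
  refine ⟨C₀ + 1, by linarith, ?_⟩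
  intro v₁ v₂ w₁ w₂ hm1 hm2 hm3 hm4 hv₁ hv₂ hw₁ hw₂
  -- G in terms of auxPhi
  have hGφ : ∀ z : ℂ, G z = ((β * σ : ℝ) : ℂ) * auxPhi σ z := by
    intro z
    rw [hG]
    simp only [auxPhi]
    split_ifs with h <;> ring
  -- a.e. bound for V
  have hVae : ∀ᵐ x ∂μ, |V x| ≤ K := by
    have hfin : eLpNormEssSup V μ ≠ ⊤ := by
      rw [← eLpNorm_exponent_top]; exact hVfin.ne
    filter_upwards [ae_le_eLpNormEssSup (f := V) (μ := μ)] with y hy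
    have := ENNReal.toReal_mono hfin hy
    simpa [Real.norm_eq_abs] using this
  -- pointwise Lipschitz estimate
  have hpt : ∀ x : α, |V x| ≤ K → ‖v₁ x‖ ≤ Mr → ‖v₂ x‖ ≤ Mr →
      ‖w₁ x‖ ≤ Mr → ‖w₂ x‖ ≤ Mr →
      ‖dB v₁ w₁ x - dB v₂ w₂ x‖
        ≤ C₀ * (‖v₁ x - v₂ x‖ + ‖w₁ x - w₂ x‖) := by
    intro x hVx h1 h2 h3 h4
    set dv : ℝ := ‖v₁ x - v₂ x‖ with hdv
    set dw : ℝ := ‖w₁ x - w₂ x‖ with hdw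
    have hdv0 : 0 ≤ dv := norm_nonneg _
    have hdw0 : 0 ≤ dw := norm_nonneg _
    set r₁ : ℝ := ‖v₁ x‖ ^ (2 * σ) with hr₁
    set r₂ : ℝ := ‖v₂ x‖ ^ (2 * σ) with hr₂
    rw [hdB, hdB, ← mul_sub, norm_mul]
    have hmI : ‖-Complex.I‖ = 1 := by simp
    rw [hmI, one_mul]
    -- decomposition into four terms
    have hdecomp :
        ((V x : ℂ) * w₁ x + (β : ℂ) * (r₁ : ℝ) * w₁ x
            + ((β * σ : ℝ) : ℂ) * (r₁ : ℝ) * w₁ x + G (v₁ x) * (starRingEnd ℂ) (w₁ x))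
          - ((V x : ℂ) * w₂ x + (β : ℂ) * (r₂ : ℝ) * w₂ x
            + ((β * σ : ℝ) : ℂ) * (r₂ : ℝ) * w₂ x + G (v₂ x) * (starRingEnd ℂ) (w₂ x))
        = (V x : ℂ) * (w₁ x - w₂ x)
          + (β : ℂ) * ((r₁ : ℝ) * w₁ x - (r₂ : ℝ) * w₂ x)
          + ((β * σ : ℝ) : ℂ) * ((r₁ : ℝ) * w₁ x - (r₂ : ℝ) * w₂ x)
          + (G (v₁ x) * (starRingEnd ℂ) (w₁ x) - G (v₂ x) * (starRingEnd ℂ) (w₂ x)) := by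
      ring
    rw [hdecomp]
    have htri : ∀ a b c d : ℂ, ‖a + b + c + d‖
        ≤ ‖a‖ + ‖b‖ + ‖c‖ + ‖d‖ := by
      intro a b c d
      calc ‖a + b + c + d‖
          ≤ ‖a + b + c‖ + ‖d‖ := norm_add_le _ _
        _ ≤ ‖a‖ + ‖b‖ + ‖c‖ + ‖d‖ := by
            have h1 := norm_add_le (a + b) c
            have h2 := norm_add_le a b
            linarith
    -- bound on the middle difference
    have hmid : ‖(r₁ : ℝ) * w₁ x - (r₂ : ℝ) * w₂ x‖
        ≤ Mr ^ (2 * σ) * dw + (2 * σ) * Mr ^ (2 * σ - 1) * Mr * dv := by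
      have hsplit : ((r₁ : ℝ) : ℂ) * w₁ x - ((r₂ : ℝ) : ℂ) * w₂ x
          = ((r₁ : ℝ) : ℂ) * (w₁ x - w₂ x) + (((r₁ - r₂ : ℝ)) : ℂ) * w₂ x := by
        push_cast; ring
      rw [hsplit]
      have hr₁0 : 0 ≤ r₁ := Real.rpow_nonneg (norm_nonneg _) _
      have hr₁M : r₁ ≤ Mr ^ (2 * σ) :=
        Real.rpow_le_rpow (norm_nonneg _) h1 hσ0
      have hrdiff : |r₁ - r₂| ≤ (2 * σ) * Mr ^ (2 * σ - 1) * dv := by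
        have hlip := aux_rpow_lip (p := 2 * σ) (M := Mr) (by linarith)
          (norm_nonneg (v₁ x)) (norm_nonneg (v₂ x)) h1 h2
        have habv := abs_norm_sub_norm_le (v₁ x) (v₂ x)
        calc |r₁ - r₂| ≤ 2 * σ * Mr ^ (2 * σ - 1) * |‖v₁ x‖ - ‖v₂ x‖| := by
              simpa using hlip
          _ ≤ 2 * σ * Mr ^ (2 * σ - 1) * dv :=
              mul_le_mul_of_nonneg_left habv (by positivity)
      calc ‖((r₁ : ℝ) : ℂ) * (w₁ x - w₂ x) + (((r₁ - r₂ : ℝ)) : ℂ) * w₂ x‖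
          ≤ ‖((r₁ : ℝ) : ℂ) * (w₁ x - w₂ x)‖
            + ‖(((r₁ - r₂ : ℝ)) : ℂ) * w₂ x‖ := norm_add_le _ _
        _ = r₁ * dw + |r₁ - r₂| * ‖w₂ x‖ := by
            rw [norm_mul, norm_mul, Complex.norm_real, Real.norm_eq_abs, Complex.norm_real, Real.norm_eq_abs,
              abs_of_nonneg hr₁0]
        _ ≤ Mr ^ (2 * σ) * dw + ((2 * σ) * Mr ^ (2 * σ - 1) * dv) * Mr := by
            have e1 : r₁ * dw ≤ Mr ^ (2 * σ) * dw := mul_le_mul_of_nonneg_right hr₁M hdw0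
            have e2 : |r₁ - r₂| * ‖w₂ x‖ ≤ ((2 * σ) * Mr ^ (2 * σ - 1) * dv) * Mr :=
              mul_le_mul hrdiff h4 (norm_nonneg _) (by positivity)
            linarith
        _ = Mr ^ (2 * σ) * dw + (2 * σ) * Mr ^ (2 * σ - 1) * Mr * dv := by ring
    -- bounds on the G-term
    have h1' : ‖v₁ x‖ ≤ Mr := h1
    have hG1 : ‖G (v₁ x)‖ ≤ |β * σ| * Mr ^ (2 * σ) := by
      rw [hGφ, norm_mul, Complex.norm_real, Real.norm_eq_abs]
      exact mul_le_mul_of_nonneg_left (aux_phi_bd hσ hMr1 h1') (abs_nonneg _)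
    have hGlip : ‖G (v₁ x) - G (v₂ x)‖
        ≤ |β * σ| * ((2 + 2 * σ) * Mr ^ (2 * σ - 1)) * dv := by
      rw [hGφ, hGφ, ← mul_sub, norm_mul, Complex.norm_real, Real.norm_eq_abs]
      have := aux_phi hσ hMr1 h1 h2
      calc |β * σ| * ‖auxPhi σ (v₁ x) - auxPhi σ (v₂ x)‖
          ≤ |β * σ| * ((2 + 2 * σ) * Mr ^ (2 * σ - 1) * dv) :=
            mul_le_mul_of_nonneg_left this (abs_nonneg _)
        _ = |β * σ| * ((2 + 2 * σ) * Mr ^ (2 * σ - 1)) * dv := by ring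
    have hT4 : ‖G (v₁ x) * (starRingEnd ℂ) (w₁ x) - G (v₂ x) * (starRingEnd ℂ) (w₂ x)‖
        ≤ |β * σ| * Mr ^ (2 * σ) * dw
          + |β * σ| * ((2 + 2 * σ) * Mr ^ (2 * σ - 1)) * Mr * dv := by
      have hsplit : G (v₁ x) * (starRingEnd ℂ) (w₁ x) - G (v₂ x) * (starRingEnd ℂ) (w₂ x)
          = G (v₁ x) * ((starRingEnd ℂ) (w₁ x) - (starRingEnd ℂ) (w₂ x))
            + (G (v₁ x) - G (v₂ x)) * (starRingEnd ℂ) (w₂ x) := by ring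
      rw [hsplit]
      have hconj : ‖(starRingEnd ℂ) (w₁ x) - (starRingEnd ℂ) (w₂ x)‖ = dw := by
        rw [← map_sub, Complex.norm_conj]
      have hconj2 : ‖(starRingEnd ℂ) (w₂ x)‖ ≤ Mr := by
        rw [Complex.norm_conj]; exact h4
      calc ‖G (v₁ x) * ((starRingEnd ℂ) (w₁ x) - (starRingEnd ℂ) (w₂ x))
            + (G (v₁ x) - G (v₂ x)) * (starRingEnd ℂ) (w₂ x)‖
          ≤ ‖G (v₁ x)‖ * ‖(starRingEnd ℂ) (w₁ x) - (starRingEnd ℂ) (w₂ x)‖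
            + ‖G (v₁ x) - G (v₂ x)‖ * ‖(starRingEnd ℂ) (w₂ x)‖ := by
            refine le_trans (norm_add_le _ _) ?_
            rw [norm_mul, norm_mul]
        _ ≤ (|β * σ| * Mr ^ (2 * σ)) * dw
            + (|β * σ| * ((2 + 2 * σ) * Mr ^ (2 * σ - 1)) * dv) * Mr := by
            rw [hconj]
            have e1 := mul_le_mul_of_nonneg_right hG1 hdw0
            have e2 := mul_le_mul hGlip hconj2 (norm_nonneg _) (by positivity)
            linarith
        _ = |β * σ| * Mr ^ (2 * σ) * dw
            + |β * σ| * ((2 + 2 * σ) * Mr ^ (2 * σ - 1)) * Mr * dv := by ring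
    -- combine
    have hT1 : ‖(V x : ℂ) * (w₁ x - w₂ x)‖ ≤ K * dw := by
      rw [norm_mul, Complex.norm_real, Real.norm_eq_abs]
      exact mul_le_mul_of_nonneg_right hVx hdw0
    have hT2 : ‖(β : ℂ) * ((r₁ : ℝ) * w₁ x - (r₂ : ℝ) * w₂ x)‖
        ≤ |β| * (Mr ^ (2 * σ) * dw + (2 * σ) * Mr ^ (2 * σ - 1) * Mr * dv) := by
      rw [norm_mul, Complex.norm_real, Real.norm_eq_abs]
      exact mul_le_mul_of_nonneg_left hmid (abs_nonneg _)
    have hT3 : ‖((β * σ : ℝ) : ℂ) * ((r₁ : ℝ) * w₁ x - (r₂ : ℝ) * w₂ x)‖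
        ≤ |β * σ| * (Mr ^ (2 * σ) * dw + (2 * σ) * Mr ^ (2 * σ - 1) * Mr * dv) := by
      rw [norm_mul, Complex.norm_real, Real.norm_eq_abs]
      exact mul_le_mul_of_nonneg_left hmid (abs_nonneg _)
    refine le_trans (htri _ _ _ _) ?_
    have hprod1 : 0 ≤ |β| * (2 * σ) * Mr ^ (2 * σ - 1) * Mr := by positivity
    have hprod2 : 0 ≤ |β * σ| * (2 * σ) * Mr ^ (2 * σ - 1) * Mr := by positivity
    have hprod3 : 0 ≤ |β * σ| * ((2 + 2 * σ) * Mr ^ (2 * σ - 1)) * Mr := by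
      have : (0:ℝ) ≤ 2 + 2 * σ := by linarith
      positivity
    have hprod4 : 0 ≤ (|β| + 2 * |β * σ|) * Mr ^ (2 * σ) := by positivity
    set Cw : ℝ := K + (|β| + 2 * |β * σ|) * Mr ^ (2 * σ) with hCw
    set Cv : ℝ := |β| * (2 * σ) * Mr ^ (2 * σ - 1) * Mr
      + |β * σ| * (2 * σ) * Mr ^ (2 * σ - 1) * Mr
      + |β * σ| * ((2 + 2 * σ) * Mr ^ (2 * σ - 1)) * Mr with hCv
    have hcwC : Cw ≤ C₀ := by rw [hCw, hC₀def]; linarith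
    have hcvC : Cv ≤ C₀ := by rw [hCv, hC₀def]; linarith
    have hsum : K * dw
        + |β| * (Mr ^ (2 * σ) * dw + (2 * σ) * Mr ^ (2 * σ - 1) * Mr * dv)
        + |β * σ| * (Mr ^ (2 * σ) * dw + (2 * σ) * Mr ^ (2 * σ - 1) * Mr * dv)
        + (|β * σ| * Mr ^ (2 * σ) * dw
          + |β * σ| * ((2 + 2 * σ) * Mr ^ (2 * σ - 1)) * Mr * dv)
        = Cw * dw + Cv * dv := by rw [hCw, hCv]; ring
    have hfin : Cw * dw + Cv * dv ≤ C₀ * (dv + dw) := by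
      have e1 : Cw * dw ≤ C₀ * dw := mul_le_mul_of_nonneg_right hcwC hdw0
      have e2 : Cv * dv ≤ C₀ * dv := mul_le_mul_of_nonneg_right hcvC hdv0
      have e3 : C₀ * (dv + dw) = C₀ * dv + C₀ * dw := by ring
      linarith
    linarith [hT1, hT2, hT3, hT4]
  -- from pointwise to L²
  have hv₁' : ∀ᵐ x ∂μ, ‖v₁ x‖ ≤ Mr :=
    hv₁.mono fun x hx => le_trans hx (le_max_left _ _)
  have hv₂' : ∀ᵐ x ∂μ, ‖v₂ x‖ ≤ Mr :=
    hv₂.mono fun x hx => le_trans hx (le_max_left _ _)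
  have hw₁' : ∀ᵐ x ∂μ, ‖w₁ x‖ ≤ Mr :=
    hw₁.mono fun x hx => le_trans hx (le_max_left _ _)
  have hw₂' : ∀ᵐ x ∂μ, ‖w₂ x‖ ≤ Mr :=
    hw₂.mono fun x hx => le_trans hx (le_max_left _ _)
  set g : α → ℝ := fun x => (C₀ + 1) * (‖v₁ x - v₂ x‖ + ‖w₁ x - w₂ x‖) with hgdef
  have hae : ∀ᵐ x ∂μ, ‖dB v₁ w₁ x - dB v₂ w₂ x‖ ≤ ‖g x‖ := by
    filter_upwards [hVae, hv₁', hv₂', hw₁', hw₂'] with x hVx hx1 hx2 hx3 hx4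
    have hb := hpt x hVx hx1 hx2 hx3 hx4
    have hsum : 0 ≤ ‖v₁ x - v₂ x‖ + ‖w₁ x - w₂ x‖ := by
      positivity
    have : ‖dB v₁ w₁ x - dB v₂ w₂ x‖
        ≤ (C₀ + 1) * (‖v₁ x - v₂ x‖ + ‖w₁ x - w₂ x‖) := by
      nlinarith
    calc ‖dB v₁ w₁ x - dB v₂ w₂ x‖
        = ‖dB v₁ w₁ x - dB v₂ w₂ x‖ := rfl
      _ ≤ (C₀ + 1) * (‖v₁ x - v₂ x‖ + ‖w₁ x - w₂ x‖) := this
      _ = g x := by rw [hgdef]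
      _ ≤ ‖g x‖ := le_abs_self _
  calc eLpNorm (fun x => dB v₁ w₁ x - dB v₂ w₂ x) 2 μ
      ≤ eLpNorm g 2 μ := eLpNorm_mono_ae hae
    _ = (‖C₀ + 1‖₊ : ENNReal) * eLpNorm (fun x => ‖v₁ x - v₂ x‖ + ‖w₁ x - w₂ x‖) 2 μ := by
        have hg' : g = (C₀ + 1) • fun x => ‖v₁ x - v₂ x‖ + ‖w₁ x - w₂ x‖ := by
          funext x
          simp [hgdef, smul_eq_mul]
        rw [hg', eLpNorm_const_smul, enorm_eq_nnnorm]
    _ ≤ ENNReal.ofReal (C₀ + 1)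
        * (eLpNorm (fun x => v₁ x - v₂ x) 2 μ + eLpNorm (fun x => w₁ x - w₂ x) 2 μ) := by
      have hnorm : (‖C₀ + 1‖₊ : ENNReal) = ENNReal.ofReal (C₀ + 1) := by
        rw [← enorm_eq_nnnorm, ← ofReal_norm, Real.norm_of_nonneg (by linarith)]
      rw [hnorm]
      refine mul_le_mul_right ?_ _
      have hadd := eLpNorm_add_le
        (((hm1.sub hm2).norm).aestronglyMeasurable)
        (((hm3.sub hm4).norm).aestronglyMeasurable)
        (p := (2 : ENNReal)) (μ := μ) one_le_two
      calc eLpNorm (fun x => ‖v₁ x - v₂ x‖ + ‖w₁ x - w₂ x‖) 2 μ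
          ≤ eLpNorm (fun x => ‖v₁ x - v₂ x‖) 2 μ + eLpNorm (fun x => ‖w₁ x - w₂ x‖) 2 μ :=
            hadd
        _ = eLpNorm (fun x => v₁ x - v₂ x) 2 μ + eLpNorm (fun x => w₁ x - w₂ x) 2 μ := by
            rw [eLpNorm_norm, eLpNorm_norm]
end

section
/- Let φ_s(x) = sin(x)/x for x ≠ 0 and φ_s(0) = 1. Then for every τ with 0 < τ < 1, every α with 0 ≤ α ≤ 2, and every θ ∈ ℝ, one has (1 + θ²)^{α/2} |φ_s(τθ²)| ≤ 2 τ^{−α/2}. -/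
/-- The sinc function `φ_s(x) = sin(x)/x` with `φ_s(0) = 1`. -/
noncomputable def phis (x : ℝ) : ℝ := if x = 0 then 1 else Real.sin x / x

lemma abs_phis_le_one (x : ℝ) : |phis x| ≤ 1 := by
  unfold phis
  split_ifs with h
  · simp
  · rw [abs_div, div_le_one (abs_pos.mpr h)]
    exact Real.abs_sin_le_abs

lemma abs_phis_le_inv {x : ℝ} (hx : 0 < x) : |phis x| ≤ 1 / x := by
  unfold phis
  rw [if_neg hx.ne']
  rw [abs_div, abs_of_pos hx, div_le_div_iff₀ hx hx, one_mul]
  nlinarith [abs_le.mpr ⟨Real.neg_one_le_sin x, Real.sin_le_one x⟩, hx]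

/-- Fourier-symbol form of the smoothing estimate
`‖φ_s(τΔ)v‖_{H^α} ≲ τ^{−α/2} ‖v‖_{L²}` (Lemma 3.7 of the paper). -/
theorem phis_smoothing_symbol (τ α θ : ℝ) (hτ0 : 0 < τ) (hτ1 : τ < 1)
    (hα0 : 0 ≤ α) (hα2 : α ≤ 2) :
    (1 + θ ^ 2) ^ (α / 2) * |phis (τ * θ ^ 2)| ≤ 2 * τ ^ (-(α / 2)) := by
  have hτα : (0:ℝ) < τ ^ (-(α/2)) := Real.rpow_pos_of_pos hτ0 _
  have h2 : (2:ℝ) ^ (α/2) ≤ 2 := by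
    calc (2:ℝ) ^ (α/2) ≤ 2 ^ (1:ℝ) :=
          Real.rpow_le_rpow_of_exponent_le one_le_two (by linarith)
      _ = 2 := Real.rpow_one 2
  have hone_lt : (1:ℝ) ≤ 1/τ := by
    rw [le_div_iff₀ hτ0]; linarith
  rcases le_or_gt (θ^2) (1/τ) with h | h
  · -- low frequency case
    have hA : (1+θ^2) ^ (α/2) ≤ (2/τ) ^ (α/2) := by
      apply Real.rpow_le_rpow (by positivity) _ (by linarith)
      have h2τ : (2:ℝ)/τ = 1/τ + 1/τ := by ring
      linarith
    have hB : ((2:ℝ)/τ) ^ (α/2) = 2 ^ (α/2) * τ ^ (-(α/2)) := by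
      rw [Real.div_rpow (by norm_num) hτ0.le, Real.rpow_neg hτ0.le, div_eq_mul_inv]
    calc (1 + θ ^ 2) ^ (α / 2) * |phis (τ * θ ^ 2)|
        ≤ (1 + θ ^ 2) ^ (α / 2) * 1 := by
          exact mul_le_mul_of_nonneg_left (abs_phis_le_one _) (by positivity)
      _ = (1 + θ ^ 2) ^ (α / 2) := mul_one _
      _ ≤ 2 ^ (α/2) * τ ^ (-(α/2)) := by rw [← hB]; exact hA
      _ ≤ 2 * τ ^ (-(α/2)) := by nlinarith
  · -- high frequency case
    have hθ2 : (0:ℝ) < θ^2 := lt_of_lt_of_le (by positivity) h.le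
    have hτθ : (0:ℝ) < τ * θ^2 := by positivity
    have hphi : |phis (τ * θ^2)| ≤ 1 / (τ * θ^2) := abs_phis_le_inv hτθ
    have hA : (1+θ^2) ^ (α/2) ≤ (2*θ^2) ^ (α/2) := by
      apply Real.rpow_le_rpow (by positivity) _ (by linarith)
      nlinarith
    have hmul : ((2:ℝ)*θ^2) ^ (α/2) = 2 ^ (α/2) * (θ^2) ^ (α/2) :=
      Real.mul_rpow (by norm_num) hθ2.le
    have hexp : (θ^2) ^ (α/2 - 1) ≤ (1/τ) ^ (α/2 - 1) :=
      Real.rpow_le_rpow_of_nonpos (by positivity) h.le (by linarith)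
    have hexp2 : ((1:ℝ)/τ) ^ (α/2 - 1) = τ * τ ^ (-(α/2)) := by
      have hx : (-1:ℝ) * (α/2 - 1) = 1 + (-(α/2)) := by ring
      rw [one_div, ← Real.rpow_neg_one τ, ← Real.rpow_mul hτ0.le, hx,
        Real.rpow_add hτ0, Real.rpow_one]
    have hsplit : (θ^2) ^ (α/2) = (θ^2) ^ (α/2 - 1) * θ^2 := by
      conv_lhs => rw [show (α/2) = (α/2-1) + 1 by ring, Real.rpow_add hθ2, Real.rpow_one]
    calc (1 + θ ^ 2) ^ (α / 2) * |phis (τ * θ ^ 2)|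
        ≤ (2*θ^2) ^ (α/2) * (1 / (τ * θ^2)) := by
          apply mul_le_mul hA hphi (abs_nonneg _) (by positivity)
      _ = 2 ^ (α/2) * ((θ^2) ^ (α/2 - 1) * θ^2) * (1 / (τ * θ^2)) := by
          rw [hmul, hsplit]
      _ = 2 ^ (α/2) * (θ^2) ^ (α/2 - 1) / τ := by
          field_simp; exact mul_inv_cancel₀ (by rintro rfl; simp at hθ2)
      _ ≤ 2 ^ (α/2) * (τ * τ ^ (-(α/2))) / τ := by
          apply div_le_div_of_nonneg_right _ hτ0.le
          rw [← hexp2]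
          have h2pos : (0:ℝ) < 2 ^ (α/2) := Real.rpow_pos_of_pos (by norm_num) _
          exact mul_le_mul_of_nonneg_left hexp h2pos.le
      _ = 2 ^ (α/2) * τ ^ (-(α/2)) := by field_simp
      _ ≤ 2 * τ ^ (-(α/2)) := by nlinarith
end

section
/- Let φ_c(x) = (x cos(x) − sin(x))/x³ for x ≠ 0 and φ_c(0) = −1/3. Then for every τ with 0 < τ < 1, every α with 0 ≤ α ≤ 2, and every θ ∈ ℝ, one has (1 + θ²)^{α/2} |φ_c(τθ²)| ≤ 4 τ^{−α/2}. -/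
/-- The even function `φ_c(x) = (x cos x − sin x)/x³` with `φ_c(0) = −1/3`. -/
noncomputable def phic (x : ℝ) : ℝ :=
  if x = 0 then -1/3 else (x * Real.cos x - Real.sin x) / x ^ 3

lemma phic_key {x : ℝ} (hx : 0 ≤ x) : (1 + x) * |phic x| ≤ 4 := by
  rcases eq_or_lt_of_le hx with h0 | h0
  · simp only [phic, ← h0, if_pos rfl]
    rw [abs_of_nonpos (by norm_num)]
    norm_num
  rcases le_or_gt x 1 with h1 | h1
  · have hnum : |x * Real.cos x - Real.sin x| ≤ x ^ 3 / 2 := by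
      have hcos : 1 - x ^ 2 / 2 ≤ Real.cos x := Real.one_sub_sq_div_two_le_cos
      have hsin1 : Real.sin x ≤ x := Real.sin_le hx
      have hsin2 : x - x ^ 3 / 4 < Real.sin x := by
        have := Real.sin_gt_sub_cube h0; nlinarith [pow_pos h0 3]
      have hcos1 : Real.cos x ≤ 1 := Real.cos_le_one x
      rw [abs_le]
      constructor
      · nlinarith
      · nlinarith
    have hx3 : (0:ℝ) < x ^ 3 := by positivity
    have : |phic x| ≤ 1 / 2 := by
      rw [phic, if_neg (ne_of_gt h0), abs_div, abs_of_pos hx3, div_le_iff₀ hx3]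
      nlinarith
    nlinarith [abs_nonneg (phic x)]
  · have hnum : |x * Real.cos x - Real.sin x| ≤ 2 * x := by
      have h1' : |x * Real.cos x| ≤ x := by
        rw [abs_mul, abs_of_pos h0]
        nlinarith [Real.abs_cos_le_one x]
      have h2' : |Real.sin x| ≤ 1 := Real.abs_sin_le_one x
      calc |x * Real.cos x - Real.sin x| ≤ |x * Real.cos x| + |Real.sin x| :=
            abs_sub _ _
        _ ≤ x + 1 := add_le_add h1' h2'
        _ ≤ 2 * x := by linarith
    have hx3 : (0:ℝ) < x ^ 3 := by positivity
    have : |phic x| ≤ 2 / x ^ 2 := by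
      rw [phic, if_neg (ne_of_gt h0), abs_div, abs_of_pos hx3, div_le_div_iff₀ hx3 (by positivity)]
      nlinarith
    have hx2 : (0:ℝ) < x ^ 2 := by positivity
    calc (1 + x) * |phic x| ≤ (1 + x) * (2 / x ^ 2) := by
          apply mul_le_mul_of_nonneg_left this (by linarith)
      _ ≤ 4 := by
          rw [mul_div_assoc', div_le_iff₀ hx2]
          nlinarith

/-- Fourier-symbol form of the smoothing estimate
`‖φ_c(τΔ)φ‖_{H^α} ≲ τ^{−α/2} ‖φ‖_{L²}` (Lemma 3.9 of the paper). -/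
theorem phic_smoothing_symbol (τ α θ : ℝ) (hτ0 : 0 < τ) (hτ1 : τ < 1)
    (hα0 : 0 ≤ α) (hα2 : α ≤ 2) :
    (1 + θ ^ 2) ^ (α / 2) * |phic (τ * θ ^ 2)| ≤ 4 * τ ^ (-(α / 2)) := by
  set x := τ * θ ^ 2 with hxdef
  have hx0 : 0 ≤ x := by positivity
  have h1x : (1:ℝ) ≤ 1 + x := by linarith
  -- step 1: (1+θ²)^{α/2} ≤ τ^{-α/2} * (1+x)^{α/2}
  have hbase : τ * (1 + θ ^ 2) ≤ 1 + x := by nlinarith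
  have hstep : (1 + θ ^ 2) ^ (α / 2) ≤ τ ^ (-(α / 2)) * (1 + x) ^ (α / 2) := by
    have h1 : (τ * (1 + θ ^ 2)) ^ (α / 2) ≤ (1 + x) ^ (α / 2) :=
      Real.rpow_le_rpow (by positivity) hbase (by linarith)
    rw [Real.mul_rpow hτ0.le (by positivity)] at h1
    have hτpow : 0 < τ ^ (α / 2) := Real.rpow_pos_of_pos hτ0 _
    rw [Real.rpow_neg hτ0.le, inv_mul_eq_div, le_div_iff₀ hτpow]
    rwa [mul_comm]
  -- step 2: (1+x)^{α/2} ≤ 1 + x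
  have hstep2 : (1 + x) ^ (α / 2) ≤ 1 + x := by
    calc (1 + x) ^ (α / 2) ≤ (1 + x) ^ (1:ℝ) :=
          Real.rpow_le_rpow_of_exponent_le h1x (by linarith)
      _ = 1 + x := Real.rpow_one _
  have habs : 0 ≤ |phic x| := abs_nonneg _
  have hτpow : 0 ≤ τ ^ (-(α / 2)) := (Real.rpow_pos_of_pos hτ0 _).le
  calc (1 + θ ^ 2) ^ (α / 2) * |phic x|
      ≤ τ ^ (-(α / 2)) * (1 + x) ^ (α / 2) * |phic x| :=
        mul_le_mul_of_nonneg_right hstep habs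
    _ ≤ τ ^ (-(α / 2)) * ((1 + x) * |phic x|) := by
        rw [mul_assoc]
        exact mul_le_mul_of_nonneg_left (mul_le_mul_of_nonneg_right hstep2 habs) hτpow
    _ ≤ τ ^ (-(α / 2)) * 4 := mul_le_mul_of_nonneg_left (phic_key hx0) hτpow
    _ = 4 * τ ^ (-(α / 2)) := mul_comm _ _
end

section
/- Let φ₁(z) = (e^z − 1)/z for z ∈ ℂ, z ≠ 0, and φ₁(0) = 1. Then for every τ with 0 < τ < 1, every α with 0 ≤ α ≤ 2, and every θ ∈ ℝ, one has (1 + θ²)^{α/2} |φ₁(−iτθ²)| ≤ 4 τ^{−α/2}. -/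
/-- The entire function `φ₁(z) = (e^z − 1)/z` with `φ₁(0) = 1`. -/
noncomputable def phi1 (z : ℂ) : ℂ := if z = 0 then 1 else (Complex.exp z - 1) / z

lemma abs_sq_eq (y : ℝ) : ‖Complex.exp (Complex.I * y) - 1‖^2 = 2 - 2*Real.cos y := by
  rw [Complex.sq_norm, Complex.normSq_apply]
  simp [Complex.exp_re, Complex.exp_im, mul_comm Complex.I (y:ℂ)]
  have := Real.sin_sq_add_cos_sq y
  nlinarith [this]

lemma abs_exp_I_sub_one_le (y : ℝ) : ‖Complex.exp (Complex.I * y) - 1‖ ≤ min |y| 2 := by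
  have h := abs_sq_eq y
  have h1 : Real.cos y ≥ 1 - y^2/2 := Real.one_sub_sq_div_two_le_cos
  have h2 : Real.cos y ≥ -1 := Real.neg_one_le_cos y
  have hnn : 0 ≤ ‖Complex.exp (Complex.I * y) - 1‖ := norm_nonneg _
  rw [le_min_iff]
  constructor
  · nlinarith [abs_nonneg y, _root_.sq_abs y]
  · nlinarith

lemma abs_phi1_le_one (y : ℝ) : ‖phi1 (Complex.I * y)‖ ≤ 1 := by
  unfold phi1
  split_ifs with h
  · simp
  · have hy : y ≠ 0 := by
      intro hy; apply h; simp [hy]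
    rw [norm_div]
    have hb := (abs_exp_I_sub_one_le y).trans (min_le_left _ _)
    have habs : ‖Complex.I * y‖ = |y| := by
      simp [Complex.norm_real]
    rw [habs, div_le_one (by positivity)]
    exact hb

lemma abs_phi1_le (y : ℝ) (hy : y ≠ 0) :
    ‖phi1 (Complex.I * y)‖ ≤ 2 / |y| := by
  unfold phi1
  have h : Complex.I * y ≠ 0 := by simp [hy]
  rw [if_neg h, norm_div]
  have hb := (abs_exp_I_sub_one_le y).trans (min_le_right _ _)
  have habs : ‖Complex.I * y‖ = |y| := by
    simp [Complex.norm_real]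
  rw [habs]
  exact div_le_div_of_nonneg_right hb (by positivity)

/-- Fourier-symbol form of the smoothing estimate
`‖φ₁(iτΔ)v‖_{H^α} ≲ τ^{−α/2} ‖v‖_{L²}` for the first step of the sEWI. -/
theorem phi1_smoothing_symbol (τ α θ : ℝ) (hτ0 : 0 < τ) (hτ1 : τ < 1)
    (hα0 : 0 ≤ α) (hα2 : α ≤ 2) :
    (1 + θ ^ 2) ^ (α / 2) * ‖phi1 (-Complex.I * (τ : ℂ) * ((θ : ℂ)) ^ 2)‖
      ≤ 4 * τ ^ (-(α / 2)) := by
  set y : ℝ := -(τ * θ ^ 2) with hy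
  have harg : -Complex.I * (τ : ℂ) * ((θ : ℂ)) ^ 2 = Complex.I * (y : ℝ) := by
    push_cast [hy]; ring
  rw [harg]
  have hτpow : (0:ℝ) < τ ^ (-(α / 2)) := Real.rpow_pos_of_pos hτ0 _
  have hexp2 : α / 2 ≤ 1 := by linarith
  by_cases hcase : τ * θ ^ 2 ≤ 1
  · -- small frequency case
    have hA : (1 + θ ^ 2) ^ (α / 2) ≤ (2 / τ) ^ (α / 2) := by
      apply Real.rpow_le_rpow (by positivity) _ (by linarith)
      have : θ ^ 2 ≤ 1 / τ := by
        rw [le_div_iff₀ hτ0]; linarith [hcase]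
      have h1τ : (1:ℝ) ≤ 1 / τ := by
        rw [le_div_iff₀ hτ0]; linarith
      calc 1 + θ ^ 2 ≤ 1/τ + 1/τ := by linarith
        _ = 2 / τ := by ring
    have hA2 : (2 / τ) ^ (α / 2) ≤ 2 * τ ^ (-(α / 2)) := by
      rw [Real.div_rpow (by norm_num) hτ0.le, Real.rpow_neg hτ0.le, div_eq_mul_inv]
      have h2 : (2:ℝ) ^ (α/2) ≤ 2 := by
        calc (2:ℝ)^(α/2) ≤ 2^(1:ℝ) := Real.rpow_le_rpow_of_exponent_le (by norm_num) hexp2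
          _ = 2 := Real.rpow_one 2
      exact mul_le_mul_of_nonneg_right h2 (by positivity)
    have hB := abs_phi1_le_one y
    calc (1 + θ ^ 2) ^ (α / 2) * ‖phi1 (Complex.I * (y:ℂ))‖
        ≤ (2 * τ ^ (-(α / 2))) * 1 := by
          apply mul_le_mul (hA.trans hA2) hB (norm_nonneg _) (by positivity)
      _ ≤ 4 * τ ^ (-(α / 2)) := by nlinarith
  · push_neg at hcase
    have hθ2 : (1:ℝ) < θ ^ 2 := by nlinarith
    have hθ0 : θ ^ 2 ≠ 0 := by nlinarith
    have hy0 : y ≠ 0 := by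
      rw [hy, neg_ne_zero]; exact ne_of_gt (by linarith)
    have hB : ‖phi1 (Complex.I * (y:ℂ))‖ ≤ 2 / (τ * θ ^ 2) := by
      have := abs_phi1_le y hy0
      rwa [hy, abs_neg, abs_of_pos (by positivity)] at this
    have hA : (1 + θ ^ 2) ^ (α / 2) ≤ 2 * (θ ^ 2) ^ (α / 2) := by
      calc (1 + θ ^ 2) ^ (α / 2) ≤ (2 * θ ^ 2) ^ (α / 2) := by
            apply Real.rpow_le_rpow (by positivity) (by linarith) (by linarith)
        _ = 2 ^ (α/2) * (θ ^ 2) ^ (α / 2) := Real.mul_rpow (by norm_num) (by positivity)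
        _ ≤ 2 * (θ ^ 2) ^ (α / 2) := by
            apply mul_le_mul_of_nonneg_right _ (by positivity)
            calc (2:ℝ) ^ (α/2) ≤ 2 ^ (1:ℝ) :=
                  Real.rpow_le_rpow_of_exponent_le (by norm_num) hexp2
              _ = 2 := by norm_num
    have key : (θ ^ 2) ^ (α / 2) / (θ ^ 2) ≤ τ ^ (1 - α/2) := by
      have h1 : (θ ^ 2) ^ (α / 2) / (θ ^ 2) = (θ ^ 2) ^ (α / 2 - 1) := by
        rw [Real.rpow_sub (by positivity), Real.rpow_one]
      rw [h1]
      have h2 : (θ ^ 2) ^ (α / 2 - 1) ≤ (1/τ) ^ (α / 2 - 1) := by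
        apply Real.rpow_le_rpow_of_nonpos (by positivity) _ (by linarith)
        rw [div_le_iff₀ hτ0]; nlinarith
      have h3 : ((1:ℝ)/τ) ^ (α / 2 - 1) = τ ^ (1 - α/2) := by
        rw [one_div, Real.inv_rpow hτ0.le, ← Real.rpow_neg hτ0.le]
        ring_nf
      linarith [h3 ▸ h2]
    calc (1 + θ ^ 2) ^ (α / 2) * ‖phi1 (Complex.I * (y:ℂ))‖
        ≤ (2 * (θ ^ 2) ^ (α / 2)) * (2 / (τ * θ ^ 2)) := by
          apply mul_le_mul hA hB (norm_nonneg _) (by positivity)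
      _ = 4 * ((θ ^ 2) ^ (α / 2) / (θ ^ 2)) / τ := by field_simp; ring
      _ ≤ 4 * τ ^ (1 - α/2) / τ := by gcongr
      _ = 4 * τ ^ (-(α / 2)) := by
          rw [show (1 - α/2) = 1 + (-(α/2)) by ring, Real.rpow_add hτ0, Real.rpow_one]
          field_simp
end

section
/- Let τ > 0, θ ∈ ℝ, and let v : ℝ → ℂ be continuously differentiable on [−τ, τ]. Then |θ ∫_{−τ}^{τ} e^{i(τ−s)θ} v(s) ds| ≤ 4 sup_{s ∈ [−τ,τ]} |v(s)| + 2τ sup_{s ∈ [−τ,τ]} |v'(s)|. -/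
open Set intervalIntegral in
private lemma bdd_abs_range {a b : ℝ} {f : ℝ → ℂ} (hf : ContinuousOn f (Set.Icc a b)) :
    BddAbove (Set.range fun s : Set.Icc a b => ‖f s‖) := by
  have : (fun s : Set.Icc a b => ‖f s‖)
      = (fun x => ‖f x‖) ∘ (Subtype.val) := rfl
  rw [this, Set.range_comp, Subtype.range_coe]
  exact (isCompact_Icc.image_of_continuousOn
    (continuous_norm.comp_continuousOn hf)).bddAbove

/-- Single-Fourier-mode form of the `H²`-bound on the symmetric Duhamel integral
`u₂ = −i∫_{−τ}^{τ} e^{i(τ−s)Δ} v(s) ds` (inequality (3.25) of the paper):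
`|θ ∫_{−τ}^{τ} e^{i(τ−s)θ} v(s) ds| ≤ 4 sup |v| + 2τ sup |v'|`. -/
theorem symmetric_duhamel_symbol_bound (τ θ : ℝ) (hτ : 0 < τ) (v v' : ℝ → ℂ)
    (hderiv : ∀ s ∈ Set.Icc (-τ) τ, HasDerivWithinAt v (v' s) (Set.Icc (-τ) τ) s)
    (hcont : ContinuousOn v' (Set.Icc (-τ) τ)) :
    ‖(θ : ℂ) *
        ∫ s in (-τ)..τ, Complex.exp (Complex.I * ((τ : ℂ) - (s : ℂ)) * (θ : ℂ)) * v s‖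
      ≤ 4 * (⨆ s : Set.Icc (-τ) τ, ‖v s‖)
        + 2 * τ * (⨆ s : Set.Icc (-τ) τ, ‖v' s‖) := by
  have hle : -τ ≤ τ := by linarith
  have hne : (Set.Icc (-τ) τ).Nonempty := Set.nonempty_Icc.2 hle
  haveI := hne.to_subtype
  set e : ℝ → ℂ := fun s => Complex.exp (Complex.I * ((τ : ℂ) - (s : ℂ)) * (θ : ℂ)) with he
  have habs_e : ∀ s : ℝ, ‖e s‖ = 1 := by
    intro s
    rw [he]
    simp [Complex.norm_exp]
  have hde : ∀ s : ℝ, HasDerivAt e (-Complex.I * θ * e s) s := by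
    intro s
    have h1 : HasDerivAt (fun s : ℝ => Complex.I * ((τ : ℂ) - (s : ℂ)) * (θ : ℂ))
        (-Complex.I * θ) s := by
      have : HasDerivAt (fun s : ℝ => ((s : ℝ) : ℂ)) 1 s := Complex.ofRealCLM.hasDerivAt
      have h2 := ((hasDerivAt_const s ((τ:ℂ))).sub this).const_mul Complex.I
      have h3 := h2.mul_const ((θ:ℂ))
      exact h3.congr_deriv (by ring)
    have := h1.cexp
    convert this using 1
    rw [he]; ring
  have hcv : ContinuousOn v (Set.Icc (-τ) τ) :=
    fun x hx => (hderiv x hx).continuousWithinAt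
  have huIcc : Set.uIcc (-τ) τ = Set.Icc (-τ) τ := Set.uIcc_of_le hle
  have hint1 : IntervalIntegrable (fun s => -Complex.I * θ * e s) MeasureTheory.volume (-τ) τ :=
    (Continuous.intervalIntegrable (by continuity) _ _)
  have hintev' : IntervalIntegrable (fun s => e s * v' s) MeasureTheory.volume (-τ) τ := by
    apply ContinuousOn.intervalIntegrable
    rw [huIcc]
    exact (Continuous.continuousOn (by continuity)).mul hcont
  have hibp := intervalIntegral.integral_deriv_mul_eq_sub_of_hasDerivWithinAt
    (u := e) (v := v) (u' := fun s => -Complex.I * θ * e s) (v' := v')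
    (a := -τ) (b := τ)
    (fun x hx => ((hde x).hasDerivWithinAt))
    (fun x hx => by rw [huIcc] at hx ⊢; exact hderiv x hx)
    hint1 (by apply ContinuousOn.intervalIntegrable; rwa [huIcc])
  -- hibp : ∫ (-I θ e x) * v x + e x * v' x = e τ * v τ - e (-τ) * v (-τ)
  have hintvprod : IntervalIntegrable (fun s => e s * v s) MeasureTheory.volume (-τ) τ := by
    apply ContinuousOn.intervalIntegrable
    rw [huIcc]
    exact (Continuous.continuousOn (by continuity)).mul hcv
  have hint2 : IntervalIntegrable (fun s => -Complex.I * θ * (e s * v s))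
      MeasureTheory.volume (-τ) τ := hintvprod.const_mul _
  have hsplit : (∫ s in (-τ)..τ, (-Complex.I * θ * e s * v s + e s * v' s))
      = -Complex.I * θ * (∫ s in (-τ)..τ, e s * v s) + ∫ s in (-τ)..τ, e s * v' s := by
    rw [intervalIntegral.integral_add (by simpa [mul_assoc] using hint2) hintev']
    rw [← intervalIntegral.integral_const_mul]
    congr 1
    apply intervalIntegral.integral_congr
    intro x _; ring
  rw [hsplit] at hibp
  have hkey : (θ : ℂ) * (∫ s in (-τ)..τ, e s * v s)
      = Complex.I * ((e τ * v τ - e (-τ) * v (-τ)) - ∫ s in (-τ)..τ, e s * v' s) := by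
    have := congrArg (fun z => Complex.I * (z - ∫ s in (-τ)..τ, e s * v' s)) hibp
    rw [← this]
    have hI : Complex.I * (-Complex.I * θ) = (θ : ℂ) := by
      have := Complex.I_mul_I; ring_nf; rw [Complex.I_sq]; ring
    ring_nf
    rw [Complex.I_sq]; ring
  set M := ⨆ s : Set.Icc (-τ) τ, ‖v s‖ with hM
  set M' := ⨆ s : Set.Icc (-τ) τ, ‖v' s‖ with hM'
  have hMb : ∀ s ∈ Set.Icc (-τ) τ, ‖v s‖ ≤ M := by
    intro s hs
    exact le_ciSup (bdd_abs_range hcv) (⟨s, hs⟩ : Set.Icc (-τ) τ)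
  have hM'b : ∀ s ∈ Set.Icc (-τ) τ, ‖v' s‖ ≤ M' := by
    intro s hs
    exact le_ciSup (bdd_abs_range hcont) (⟨s, hs⟩ : Set.Icc (-τ) τ)
  have hM0 : 0 ≤ M := le_trans (norm_nonneg _) (hMb (-τ) (by constructor <;> linarith))
  have hintbound : ‖∫ s in (-τ)..τ, e s * v' s‖ ≤ 2 * τ * M' := by
    have := intervalIntegral.norm_integral_le_of_norm_le_const
      (C := M') (f := fun s => e s * v' s) (a := -τ) (b := τ) ?_
    · calc ‖∫ s in (-τ)..τ, e s * v' s‖ ≤ M' * |τ - (-τ)| := this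
        _ = 2 * τ * M' := by rw [abs_of_pos (by linarith)]; ring
    · intro x hx
      rw [Set.uIoc_of_le hle] at hx
      have hx' : x ∈ Set.Icc (-τ) τ := ⟨le_of_lt hx.1, hx.2⟩
      calc ‖e x * v' x‖ = ‖e x‖ * ‖v' x‖ := norm_mul _ _
        _ = ‖v' x‖ := by rw [habs_e]; ring
        _ ≤ M' := hM'b x hx'
  calc ‖(θ : ℂ) * ∫ s in (-τ)..τ, e s * v s‖
      = ‖(e τ * v τ - e (-τ) * v (-τ)) - ∫ s in (-τ)..τ, e s * v' s‖ := by
        rw [hkey, norm_mul, Complex.norm_I, one_mul]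
    _ ≤ ‖e τ * v τ - e (-τ) * v (-τ)‖
        + ‖∫ s in (-τ)..τ, e s * v' s‖ := by
          exact norm_sub_le (e τ * v τ - e (-τ) * v (-τ))
            (∫ s in (-τ)..τ, e s * v' s)
    _ ≤ (‖e τ * v τ‖ + ‖e (-τ) * v (-τ)‖) + 2 * τ * M' := by
        gcongr
        exact norm_sub_le (e τ * v τ) (e (-τ) * v (-τ))
    _ ≤ (M + M) + 2 * τ * M' := by
        gcongr <;> rw [norm_mul, habs_e, one_mul]
        · exact hMb τ (by constructor <;> linarith)
        · exact hMb (-τ) (by constructor <;> linarith)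
    _ ≤ 4 * M + 2 * τ * M' := by linarith
end

section
/- Let b, θ ∈ ℝ with |b| ≤ 1, and let φ_s(θ) = sin(θ)/θ for θ ≠ 0, φ_s(0) = 1. Then every complex root λ of the quadratic equation λ² + 2 i b φ_s(θ) e^{−iθ} λ − e^{−2iθ} = 0 satisfies |λ| = 1. -/
/-- Von Neumann linear stability of the two-step sEWI: if `|b| ≤ 1` then every
root of the characteristic polynomial
`λ² + 2ib φ_s(θ) e^{−iθ} λ − e^{−2iθ}` lies on the unit circle. -/
theorem sEWI_von_neumann_stability (b θ : ℝ) (hb : |b| ≤ 1) :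
    ∀ lam : ℂ,
      lam ^ 2 + 2 * Complex.I * (b : ℂ) * ((phis θ : ℝ) : ℂ)
          * Complex.exp (-Complex.I * (θ : ℂ)) * lam
          - Complex.exp (-2 * Complex.I * (θ : ℂ)) = 0 →
      ‖lam‖ = 1 := by
  intro lam h
  set c : ℝ := b * phis θ with hc
  have hc1 : |c| ≤ 1 := by
    calc |c| = |b| * |phis θ| := abs_mul _ _
    _ ≤ 1 * 1 := mul_le_mul hb (abs_phis_le_one θ) (abs_nonneg _) zero_le_one
    _ = 1 := one_mul 1
  set μ : ℂ := lam * Complex.exp (Complex.I * θ) with hμ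
  have hexp : Complex.exp (Complex.I * θ) * Complex.exp (-Complex.I * θ) = 1 := by
    rw [← Complex.exp_add]; ring_nf; exact Complex.exp_zero
  have hexp2 : Complex.exp (Complex.I * θ) ^ 2 * Complex.exp (-2 * Complex.I * θ) = 1 := by
    rw [← Complex.exp_nat_mul, ← Complex.exp_add]; ring_nf; exact Complex.exp_zero
  have hquad : μ ^ 2 + 2 * Complex.I * (c : ℂ) * μ - 1 = 0 := by
    rw [hμ, hc]
    push_cast
    linear_combination (Complex.exp (Complex.I * (θ:ℂ))) ^ 2 * h
      - (2 * Complex.I * (b:ℂ) * ((phis θ : ℝ):ℂ) * lam * Complex.exp (Complex.I * (θ:ℂ))) * hexp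
      + hexp2
  -- complete the square: (μ + I c)^2 = 1 - c^2
  set r : ℝ := Real.sqrt (1 - c ^ 2) with hr
  have hr2 : (r : ℝ) ^ 2 = 1 - c ^ 2 := by
    rw [hr, Real.sq_sqrt]
    nlinarith [abs_nonneg c, sq_abs c, hc1]
  have hfact : (μ + Complex.I * c - r) * (μ + Complex.I * c + r) = 0 := by
    have hrc : ((r : ℝ) : ℂ) ^ 2 = 1 - ((c : ℝ) : ℂ) ^ 2 := by
      have := congrArg (fun x : ℝ => (x : ℂ)) hr2
      push_cast at this
      simpa using this
    calc (μ + Complex.I * c - r) * (μ + Complex.I * c + r)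
        = μ ^ 2 + 2 * Complex.I * (c : ℂ) * μ + Complex.I ^ 2 * c ^ 2 - (r : ℂ) ^ 2 := by ring
      _ = μ ^ 2 + 2 * Complex.I * (c : ℂ) * μ - 1 := by
          rw [Complex.I_sq, hrc]; ring
      _ = 0 := hquad
  have habsμ : ‖μ‖ = 1 := by
    have key : ∀ s : ℝ, μ = (s : ℂ) - Complex.I * c → s ^ 2 + c ^ 2 = 1 → ‖μ‖ = 1 := by
      intro s hs hs1
      have hs' : μ = (s : ℂ) + ((-c : ℝ) : ℂ) * Complex.I := by
        rw [hs]; push_cast; ring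
      have habs2 : ‖μ‖ ^ 2 = 1 := by
        rw [hs', Complex.sq_norm, Complex.normSq_add_mul_I]
        nlinarith
      nlinarith [norm_nonneg μ]
    rcases mul_eq_zero.mp hfact with h1 | h1
    · exact key r (by linear_combination h1) (by nlinarith)
    · exact key (-r) (by push_cast; linear_combination h1) (by nlinarith)
  have habse : ‖Complex.exp (Complex.I * θ)‖ = 1 := by
    rw [mul_comm, Complex.norm_exp_ofReal_mul_I]
  rw [hμ, norm_mul, habse, mul_one] at habsμ
  exact habsμ
end
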